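/- arXiv:1510.03420 — 5 statements merged into one kernel-verified Lean document; each statement's English description precedes it below -/
import Mathlib

section
/- Let λ : ℕ → ℂ be a sequence with ∑_n ‖λ_n‖ < ∞ such that λ_n ≠ 0 for every n. Then every λ_n is a positive real number if and only if there exists a real number c with ‖λ_n‖ ≤ c for all n such that for all integers j, k ≥ 0 the number ∑_{i=0}^{j} (−1)^i binom(j,i) p_{k+1+i}/c^{k+1+i} is a nonnegative real number (i.e. it has zero imaginary part and nonnegative real part). -/
open Complex Finset Filter Topology


lemma aux_sumpow (μ : ℕ → ℂ) (hs : Summable fun n => ‖μ n‖) (hb : ∀ n, ‖μ n‖ ≤ 1)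
    (k j : ℕ) (hk : 1 ≤ k) : Summable (fun n => μ n ^ k * (1 - μ n) ^ j) := by
  apply Summable.of_norm_bounded (g := fun n => ‖μ n‖ * 2 ^ j) (hs.mul_right _)
  intro n
  rw [norm_mul, norm_pow, norm_pow]
  have h1 : ‖μ n‖ ^ k ≤ ‖μ n‖ := by
    simpa using pow_le_pow_of_le_one (norm_nonneg _) (hb n) hk
  have h2 : ‖1 - μ n‖ ≤ 2 := by
    calc ‖1 - μ n‖ ≤ ‖(1:ℂ)‖ + ‖μ n‖ := norm_sub_le _ _
    _ ≤ 2 := by simp only [norm_one]; linarith [hb n]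
  exact mul_le_mul h1 (pow_le_pow_left₀ (norm_nonneg _) h2 j) (by positivity) (norm_nonneg _)

lemma aux_key_identity (μ : ℕ → ℂ) (hs : Summable fun n => ‖μ n‖) (hb : ∀ n, ‖μ n‖ ≤ 1)
    (j k : ℕ) :
    ∑ i ∈ Finset.range (j + 1), (-1 : ℂ) ^ i * (j.choose i) * (∑' n, μ n ^ (k + 1 + i))
      = ∑' n, μ n ^ (k + 1) * (1 - μ n) ^ j := by
  have hsm : ∀ i ∈ Finset.range (j+1),
      Summable fun n => (-1:ℂ)^i * (j.choose i) * μ n ^ (k+1+i) := by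
    intro i _
    apply Summable.mul_left
    simpa using aux_sumpow μ hs hb (k+1+i) 0 (by omega)
  calc ∑ i ∈ Finset.range (j+1), (-1:ℂ)^i * (j.choose i) * (∑' n, μ n ^ (k+1+i))
      = ∑ i ∈ Finset.range (j+1), ∑' n, (-1:ℂ)^i * (j.choose i) * μ n ^ (k+1+i) := by
        refine Finset.sum_congr rfl fun i _ => ?_
        rw [tsum_mul_left]
    _ = ∑' n, ∑ i ∈ Finset.range (j+1), (-1:ℂ)^i * (j.choose i) * μ n ^ (k+1+i) :=
        (Summable.tsum_finsetSum hsm).symm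
    _ = ∑' n, μ n ^ (k+1) * (1 - μ n)^j := by
        congr 1; funext n
        rw [show (1 : ℂ) - μ n = -μ n + 1 by ring, add_pow, Finset.mul_sum]
        refine Finset.sum_congr rfl fun i hi => ?_
        rw [neg_pow, one_pow, show k + 1 + i = (k+1) + i from rfl, pow_add]
        ring

lemma aux_bad_one_lt (z : ℂ) (h0 : z ≠ 0) (h : ¬(z.im = 0 ∧ 0 < z.re)) :
    1 < ‖z‖ + ‖1 - z‖ := by
  have k1 : |z.re| ≤ ‖z‖ := Complex.abs_re_le_norm z
  have k2 : |(1-z).re| ≤ ‖1 - z‖ := Complex.abs_re_le_norm _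
  have e2 : (1 - z).re = 1 - z.re := by simp
  by_cases him : z.im = 0
  · have hre : z.re < 0 := by
      rcases lt_trichotomy z.re 0 with h'|h'|h'
      · exact h'
      · exact absurd (Complex.ext h' him) h0
      · exact absurd ⟨him, h'⟩ h
    have b1 : -z.re ≤ |z.re| := neg_le_abs _
    have b2 : 1 - z.re ≤ |(1-z).re| := by rw [e2]; exact le_abs_self _
    linarith
  · have s1 : |z.re| < ‖z‖ := Complex.abs_re_lt_norm.2 him
    have s2 : |(1-z).re| < ‖1 - z‖ := Complex.abs_re_lt_norm.2 (by simp [him])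
    have b1 : z.re ≤ |z.re| := le_abs_self _
    have b2 : 1 - z.re ≤ |(1-z).re| := by rw [e2]; exact le_abs_self _
    linarith

lemma aux_circle_inter (z w : ℂ) (h1 : ‖z‖ = ‖w‖) (h2 : ‖1 - z‖ = ‖1 - w‖) :
    z = w ∨ z = (starRingEnd ℂ) w := by
  have e1 : normSq z = normSq w := by
    rw [← Complex.sq_norm, ← Complex.sq_norm]
    simp only [h1]
  have e2 : normSq (1 - z) = normSq (1 - w) := by
    rw [← Complex.sq_norm, ← Complex.sq_norm]
    simp only [h2]
  rw [Complex.normSq_apply, Complex.normSq_apply] at e1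
  rw [Complex.normSq_apply, Complex.normSq_apply] at e2
  simp only [Complex.sub_re, Complex.sub_im, Complex.one_re, Complex.one_im] at e2
  have hre : z.re = w.re := by nlinarith
  have him : z.im = w.im ∨ z.im = -w.im := by
    have : z.im * z.im = w.im * w.im := by nlinarith
    rcases mul_self_eq_mul_self_iff.1 this with h|h
    · exact Or.inl h
    · exact Or.inr h
  rcases him with h|h
  · exact Or.inl (Complex.ext hre h)
  · exact Or.inr (Complex.ext (by simpa using hre) (by simpa using h))


lemma aux_cos_neg (ψ : ℝ) (h0 : 0 < ψ) (hπ : ψ < Real.pi) :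
    ∃ δ : ℕ, Real.cos (δ * ψ) < 0 := by
  classical
  have hex : ∃ δ : ℕ, Real.pi / 2 < δ * ψ := by
    obtain ⟨n, hn⟩ := exists_nat_gt (Real.pi / 2 / ψ)
    exact ⟨n, by rwa [div_lt_iff₀ h0] at hn⟩
  set δ := Nat.find hex with hδdef
  have h1 : Real.pi/2 < δ * ψ := Nat.find_spec hex
  have hδ1 : 1 ≤ δ := by
    by_contra hc
    have : δ = 0 := by omega
    rw [this] at h1
    simp at h1
    linarith [Real.pi_pos]
  have h2 : ¬ (Real.pi/2 < ((δ - 1 : ℕ):ℝ) * ψ) := Nat.find_min hex (by omega)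
  push_neg at h2
  have hcast : ((δ - 1 : ℕ):ℝ) = (δ:ℝ) - 1 := by
    have : (1:ℕ) ≤ δ := hδ1
    push_cast [this]
    ring
  rw [hcast] at h2
  have h3 : (δ:ℝ) * ψ < Real.pi + Real.pi / 2 := by nlinarith
  exact ⟨δ, Real.cos_neg_of_pi_div_two_lt_of_lt h1 h3⟩

lemma aux_re_pow_neg (z : ℂ) (him : z.im ≠ 0) : ∃ δ : ℕ, (z ^ δ).re < 0 := by
  have hz0 : z ≠ 0 := fun h => him (by simp [h])
  have habs : 0 < ‖z‖ := norm_pos_iff.mpr hz0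
  set φ := z.arg with hφdef
  have hφ0 : φ ≠ 0 := fun h => him ((Complex.arg_eq_zero_iff.1 h).2)
  have hφπ : |φ| < Real.pi := by
    rcases lt_or_eq_of_le (Complex.abs_arg_le_pi z) with h|h
    · exact h
    · exfalso
      have : φ = Real.pi ∨ φ = -Real.pi := abs_eq (le_of_lt Real.pi_pos) |>.1 h
      rcases this with h'|h'
      · exact him (Complex.arg_eq_pi_iff.1 h').2
      · linarith [Complex.neg_pi_lt_arg z, h'.symm ▸ le_refl φ, show φ = -Real.pi from h']
  have hψ0 : 0 < |φ| := abs_pos.2 hφ0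
  obtain ⟨δ, hδ⟩ := aux_cos_neg |φ| hψ0 hφπ
  refine ⟨δ, ?_⟩
  have hzpow : z ^ δ = ((‖z‖ ^ δ : ℝ) : ℂ) * Complex.exp (((δ : ℝ) * φ : ℝ) * I) := by
    conv_lhs => rw [← Complex.norm_mul_exp_arg_mul_I z]
    rw [mul_pow, ← Complex.exp_nat_mul]
    push_cast
    rw [← hφdef]
    ring_nf
  rw [hzpow, Complex.re_ofReal_mul, Complex.exp_ofReal_mul_I_re]
  have hcos : Real.cos ((δ:ℝ) * φ) < 0 := by
    have : Real.cos ((δ:ℝ) * φ) = Real.cos (|(δ:ℝ) * φ|) := (Real.cos_abs _).symm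
    rw [this, abs_mul, Nat.abs_cast]
    exact hδ
  exact mul_neg_of_pos_of_neg (pow_pos habs δ) hcos


lemma aux_ratpick {ι : Type*} (s : Finset ι) (L M : ι → ℝ) (a b : ℝ) (ha : 0 < a)
    (hb : 0 < b) (h : ∀ i ∈ s, a * L i + b * M i < 0) :
    ∃ K J : ℕ, 1 ≤ K ∧ 1 ≤ J ∧ ∀ i ∈ s, (K : ℝ) * L i + (J : ℝ) * M i < 0 := by
  classical
  have hab : 0 < a + b := by linarith
  set t₀ : ℝ := a / (a + b) with ht₀def
  have ht01 : 0 < t₀ := by positivity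
  have ht02 : t₀ < 1 := by rw [ht₀def, div_lt_one hab]; linarith
  have h1t₀ : 1 - t₀ = b / (a + b) := by rw [ht₀def]; field_simp; ring
  set F : ι → ℝ := fun i => (-(a * L i + b * M i) / (a+b)) / (|L i| + |M i| + 1) with hFdef
  have hFpos : ∀ i ∈ s, 0 < F i := by
    intro i hi
    have h1 := h i hi
    have h2 : 0 < -(a*L i + b*M i) := by linarith
    have h3 : 0 < |L i| + |M i| + 1 := by positivity
    exact div_pos (div_pos h2 hab) h3
  set T : Finset ℝ := insert 1 (s.image F) with hTdef
  have hTne : T.Nonempty := ⟨1, Finset.mem_insert_self _ _⟩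
  set η₀ : ℝ := T.min' hTne with hη₀def
  have hη₀pos : 0 < η₀ := by
    have hmem := T.min'_mem hTne
    rcases Finset.mem_insert.1 hmem with h'|h'
    · rw [hη₀def, h']; norm_num
    · obtain ⟨i, hi, hFi⟩ := Finset.mem_image.1 h'
      rw [hη₀def, ← hFi]
      exact hFpos i hi
  have hη₀le : ∀ i ∈ s, η₀ ≤ F i := fun i hi =>
    Finset.min'_le _ _ (Finset.mem_insert_of_mem (Finset.mem_image_of_mem F hi))
  set η : ℝ := min (min (t₀/2) ((1-t₀)/2)) η₀ with hηdef
  have hηpos : 0 < η := lt_min (lt_min (by linarith) (by linarith)) hη₀pos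
  obtain ⟨q, hq1, hq2⟩ := exists_rat_btwn (show t₀ - η < t₀ by linarith)
  have hηt : η ≤ t₀/2 := le_trans (min_le_left _ _) (min_le_left _ _)
  have hηη₀ : η ≤ η₀ := min_le_right _ _
  have hq0 : 0 < (q:ℝ) := by linarith
  have hql : (q:ℝ) < 1 := by linarith
  have hq0' : 0 < q := by exact_mod_cast hq0
  have hnum : 0 < q.num := Rat.num_pos.2 hq0'
  have hden : 0 < (q.den : ℝ) := by exact_mod_cast q.den_pos
  have hcast : (q:ℝ) = (q.num : ℝ) / (q.den : ℝ) := by rw [Rat.cast_def]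
  have hnd : (q.num : ℝ) < (q.den : ℝ) := by
    rw [hcast, div_lt_one hden] at hql
    exact hql
  set K : ℕ := q.num.toNat with hKdef
  have hKcast : (K : ℝ) = (q.num : ℝ) := by
    rw [hKdef]; exact_mod_cast Int.toNat_of_nonneg hnum.le
  have hKden : K < q.den := by
    have : (K:ℝ) < (q.den:ℝ) := by rw [hKcast]; exact hnd
    exact_mod_cast this
  set J : ℕ := q.den - K with hJdef
  have hJcast : (J : ℝ) = (q.den : ℝ) - (K:ℝ) := by
    rw [hJdef]; push_cast [le_of_lt hKden]; ring
  have hK1 : 1 ≤ K := by rw [hKdef]; omega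
  refine ⟨K, J, hK1, by omega, fun i hi => ?_⟩
  have hKq : (K:ℝ) = (q:ℝ) * q.den := by rw [hKcast, hcast]; field_simp
  have hJq : (J:ℝ) = (1 - (q:ℝ)) * q.den := by rw [hJcast, hKq]; ring
  have expand : (K:ℝ) * L i + (J:ℝ) * M i = ((q:ℝ) * L i + (1-(q:ℝ)) * M i) * q.den := by
    rw [hKq, hJq]; ring
  rw [expand]
  apply mul_neg_of_neg_of_pos _ hden
  have base : t₀ * L i + (1 - t₀) * M i = -F i * (|L i| + |M i| + 1) := by
    rw [hFdef, ht₀def, h1t₀]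
    have h3 : (|L i| + |M i| + 1) ≠ 0 := by positivity
    field_simp
  have diff : (q:ℝ) * L i + (1-(q:ℝ)) * M i
      = (t₀ * L i + (1-t₀)*M i) + ((q:ℝ) - t₀) * (L i - M i) := by ring
  have habs1 : |(q:ℝ) - t₀| ≤ η := by rw [abs_le]; constructor <;> linarith
  have habs2 : |((q:ℝ) - t₀) * (L i - M i)| ≤ η * (|L i| + |M i|) := by
    rw [abs_mul]
    exact mul_le_mul habs1 (abs_sub _ _) (abs_nonneg _) hηpos.le
  have hle : ((q:ℝ) - t₀) * (L i - M i) ≤ η * (|L i| + |M i|) :=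
    le_trans (le_abs_self _) habs2
  have hFi := hFpos i hi
  have hηF : η ≤ F i := le_trans hηη₀ (hη₀le i hi)
  have hprod : η * (|L i| + |M i|) ≤ F i * (|L i| + |M i|) :=
    mul_le_mul_of_nonneg_right hηF (by positivity)
  rw [diff, base]
  nlinarith [abs_nonneg (L i), abs_nonneg (M i)]

lemma aux_subseq (u : ℂ) (hu : ‖u‖ = 1) :
    ∃ m : ℕ → ℕ, (∀ i, i + 1 ≤ m i) ∧ Tendsto (fun i => u ^ m i) atTop (𝓝 1) := by
  have hu0 : u ≠ 0 := by intro h; rw [h] at hu; simp at hu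
  have hbd : Bornology.IsBounded (Metric.closedBall (0:ℂ) 1) := Metric.isBounded_closedBall
  have hmem : ∀ n : ℕ, u ^ n ∈ Metric.closedBall (0:ℂ) 1 := fun n => by
    simp [Metric.mem_closedBall, dist_zero_right, norm_pow, hu]
  obtain ⟨t, _, φ, hφ, hlim⟩ := tendsto_subseq_of_bounded hbd hmem
  have htnorm : ‖t‖ = 1 := by
    have h1 : Tendsto (fun i => ‖u ^ φ i‖) atTop (𝓝 ‖t‖) :=
      (continuous_norm.tendsto t).comp hlim
    have h2 : (fun i : ℕ => ‖u ^ φ i‖) = fun _ => (1:ℝ) :=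
      funext fun i => by rw [norm_pow, hu, one_pow]
    rw [h2] at h1
    exact (tendsto_nhds_unique tendsto_const_nhds h1).symm
  have ht0 : t ≠ 0 := by intro h; rw [h] at htnorm; simp at htnorm
  have hmono : ∀ i k : ℕ, φ i + k ≤ φ (i + k) := by
    intro i k
    induction k with
    | zero => simp
    | succ k ih =>
      have h1 : φ (i+k) < φ (i+k+1) := hφ (by omega)
      have h2 : i + (k+1) = i+k+1 := by ring
      rw [h2]
      omega
  refine ⟨fun i => φ (2*i + 2) - φ (i + 1), fun i => ?_, ?_⟩
  · show i + 1 ≤ φ (2*i+2) - φ (i+1)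
    have h1 := hmono (i+1) (i+1)
    have h2 : (i+1) + (i+1) = 2*i+2 := by ring
    rw [h2] at h1
    omega
  · have key : ∀ i, u ^ (φ (2*i+2) - φ (i+1)) = u ^ (φ (2*i+2)) / u ^ (φ (i+1)) := by
      intro i
      have hle : φ (i+1) ≤ φ (2*i+2) := hφ.le_iff_le.2 (by omega)
      rw [pow_sub₀ u hu0 hle, div_eq_mul_inv]
    have l1 : Tendsto (fun i : ℕ => u ^ φ (2*i+2)) atTop (𝓝 t) := by
      apply hlim.comp
      exact tendsto_atTop_mono (fun i => by simp only [id_eq]; omega) tendsto_id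
    have l2 : Tendsto (fun i : ℕ => u ^ φ (i+1)) atTop (𝓝 t) := by
      apply hlim.comp
      exact tendsto_atTop_mono (fun i => by simp only [id_eq]; omega) tendsto_id
    have hdiv := l1.div l2 ht0
    rw [div_self ht0] at hdiv
    have : (fun i => u ^ (φ (2*i+2) - φ (i+1)))
        = fun i => u ^ φ (2*i+2) / u ^ φ (i+1) := funext key
    rw [this]
    exact hdiv

lemma aux_finite_ge (μ : ℕ → ℂ) (hs : Summable fun n => ‖μ n‖) (c : ℝ) (hc : 0 < c) :
    Set.Finite {n | c ≤ ‖μ n‖} := by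
  have h0 : Tendsto (fun n => ‖μ n‖) atTop (𝓝 0) := hs.tendsto_atTop_zero
  have hev : ∀ᶠ n in atTop, ‖μ n‖ < c := h0.eventually_lt_const hc
  obtain ⟨M, hM⟩ := eventually_atTop.1 hev
  apply Set.Finite.subset (Set.finite_Iio M)
  intro n hn
  simp only [Set.mem_setOf_eq] at hn
  by_contra hc'
  simp only [Set.mem_Iio, not_lt] at hc'
  exact absurd hn (not_le.2 (hM n hc'))

lemma aux_backward (μ : ℕ → ℂ) (hs : Summable fun n => ‖μ n‖) (hne : ∀ n, μ n ≠ 0)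
    (hb : ∀ n, ‖μ n‖ ≤ 1)
    (hS : ∀ j k : ℕ, 1 ≤ k → (∑' n, μ n ^ k * (1 - μ n) ^ j).im = 0 ∧
        0 ≤ (∑' n, μ n ^ k * (1 - μ n) ^ j).re) :
    ∀ n, (μ n).im = 0 ∧ 0 < (μ n).re := by
  classical
  by_contra hcon
  push_neg at hcon
  obtain ⟨n₀, hbad⟩ := hcon
  have hbad' : ¬((μ n₀).im = 0 ∧ 0 < (μ n₀).re) := by
    rintro ⟨h1, h2⟩
    linarith [hbad h1]
  have hnorm0 : Tendsto (fun n => ‖μ n‖) atTop (𝓝 0) := hs.tendsto_atTop_zero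
  have hμ0 : Tendsto μ atTop (𝓝 0) := tendsto_zero_iff_norm_tendsto_zero.2 hnorm0
  set v : ℕ → ℝ := fun n => ‖μ n‖ + ‖1 - μ n‖ with hvdef
  have hvlim : Tendsto v atTop (𝓝 1) := by
    have h3 : Tendsto (fun n => 1 - μ n) atTop (𝓝 (1 - 0)) := tendsto_const_nhds.sub hμ0
    have h2 : Tendsto (fun n => ‖1 - μ n‖) atTop (𝓝 ‖(1:ℂ) - 0‖) :=
      (continuous_norm.tendsto ((1:ℂ) - 0)).comp h3
    have h4 := hnorm0.add h2
    simpa [hvdef] using h4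
  have hv₀ : 1 < v n₀ := aux_bad_one_lt _ (hne n₀) hbad'
  obtain ⟨N, hN1, hNmax⟩ : ∃ N, 1 < v N ∧ ∀ n, v n ≤ v N := by
    have hev : ∀ᶠ n in atTop, v n < v n₀ := hvlim.eventually_lt_const hv₀
    obtain ⟨M, hM⟩ := eventually_atTop.1 hev
    obtain ⟨N, hNmem, hNbig⟩ := Finset.exists_max_image (insert n₀ (Finset.range M)) v
      ⟨n₀, Finset.mem_insert_self _ _⟩
    refine ⟨N, lt_of_lt_of_le hv₀ (hNbig n₀ (Finset.mem_insert_self _ _)), fun n => ?_⟩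
    by_cases hn : n < M
    · exact hNbig n (Finset.mem_insert_of_mem (Finset.mem_range.2 hn))
    · exact le_trans (hM n (by omega)).le (hNbig n₀ (Finset.mem_insert_self _ _))
  set a : ℝ := ‖μ N‖ with hadef
  set b : ℝ := ‖1 - μ N‖ with hbdef
  have ha : 0 < a := norm_pos_iff.2 (hne N)
  have ha1 : a ≤ 1 := hb N
  have hab1 : 1 < a + b := hN1
  have hbpos : 0 < b := by linarith
  have hEfin : Set.Finite {n | μ n = μ N ∨ μ n = (starRingEnd ℂ) (μ N)} := by
    apply Set.Finite.subset (aux_finite_ge μ hs a ha)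
    intro n hn
    rcases hn with h|h
    · simp only [Set.mem_setOf_eq, h, hadef]
      exact le_refl _
    · simp only [Set.mem_setOf_eq, h, hadef, RCLike.norm_conj]
      exact le_refl _
  set Efin : Finset ℕ := hEfin.toFinset with hEdef
  have hmemE : ∀ n, n ∈ Efin ↔ (μ n = μ N ∨ μ n = (starRingEnd ℂ) (μ N)) := by
    intro n
    rw [hEdef, Set.Finite.mem_toFinset]
    rfl
  have hNE : N ∈ Efin := (hmemE N).2 (Or.inl rfl)
  -- choice of ε
  set ε : ℝ := min (a/2) (Real.exp ((a * Real.log a - b * Real.log (2/b) - a) / a)) with hεdef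
  have hε0 : 0 < ε := lt_min (by linarith) (Real.exp_pos _)
  have hεtail : a * Real.log (ε/a) + b * Real.log (2/b) < 0 := by
    have h2 : Real.log ε ≤ (a * Real.log a - b * Real.log (2/b) - a) / a := by
      have h2' := Real.log_le_log hε0 (min_le_right (a/2) _)
      rwa [Real.log_exp] at h2'
    have h5 := mul_le_mul_of_nonneg_left h2 ha.le
    have h6 : a * ((a * Real.log a - b * Real.log (2/b) - a) / a)
        = a * Real.log a - b * Real.log (2/b) - a := by field_simp
    rw [Real.log_div hε0.ne' ha.ne']
    linarith
  -- separation data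
  set G : Finset ℕ := ((aux_finite_ge μ hs ε hε0).toFinset \ Efin).filter (fun n => μ n ≠ 1)
    with hGdef
  set L : Option ℕ → ℝ :=
    fun o => Option.elim o (Real.log (ε/a)) (fun n => Real.log (‖μ n‖/a)) with hLdef
  set M : Option ℕ → ℝ :=
    fun o => Option.elim o (Real.log (2/b)) (fun n => Real.log (‖1 - μ n‖/b)) with hMdef
  set sidx : Finset (Option ℕ) := insert none (G.image some) with hsidxdef
  have hsep : ∀ o ∈ sidx, a * L o + b * M o < 0 := by
    intro o ho
    rcases Finset.mem_insert.1 ho with rfl|ho'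
    · simpa [hLdef, hMdef] using hεtail
    · obtain ⟨n, hnG, rfl⟩ := Finset.mem_image.1 ho'
      obtain ⟨hnmem, hn1⟩ := Finset.mem_filter.1 hnG
      have hnE : n ∉ Efin := (Finset.mem_sdiff.1 hnmem).2
      have hx0 : 0 < ‖μ n‖ := norm_pos_iff.2 (hne n)
      have hy0 : 0 < ‖1 - μ n‖ := by
        rw [norm_pos_iff]
        intro h
        exact hn1 (by linear_combination -h)
      have hxy : ‖μ n‖ + ‖1 - μ n‖ ≤ a + b := hNmax n
      have hne_ab : ¬(‖μ n‖ = a ∧ ‖1 - μ n‖ = b) := by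
        rintro ⟨hxa, hyb⟩
        exact hnE ((hmemE n).2 (aux_circle_inter (μ n) (μ N) hxa hyb))
      simp only [hLdef, hMdef, Option.elim]
      have lx : Real.log (‖μ n‖/a) ≤ ‖μ n‖/a - 1 := Real.log_le_sub_one_of_pos (by positivity)
      have ly : Real.log (‖1 - μ n‖/b) ≤ ‖1 - μ n‖/b - 1 :=
        Real.log_le_sub_one_of_pos (by positivity)
      have e1 : a * (‖μ n‖/a - 1) = ‖μ n‖ - a := by field_simp
      have e2 : b * (‖1 - μ n‖/b - 1) = ‖1 - μ n‖ - b := by field_simp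
      by_cases hxa : ‖μ n‖ = a
      · have hyb : ‖1 - μ n‖ ≠ b := fun h => hne_ab ⟨hxa, h⟩
        have ly' : Real.log (‖1 - μ n‖/b) < ‖1 - μ n‖/b - 1 := by
          apply Real.log_lt_sub_one_of_pos (by positivity)
          intro h
          exact hyb ((div_eq_one_iff_eq hbpos.ne').1 h)
        linarith [mul_le_mul_of_nonneg_left lx ha.le, mul_lt_mul_of_pos_left ly' hbpos, e1, e2, hxy, hxa]
      · have lx' : Real.log (‖μ n‖/a) < ‖μ n‖/a - 1 := by
          apply Real.log_lt_sub_one_of_pos (by positivity)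
          intro h
          exact hxa ((div_eq_one_iff_eq ha.ne').1 h)
        linarith [mul_lt_mul_of_pos_left lx' ha, mul_le_mul_of_nonneg_left ly hbpos.le, e1, e2, hxy]
  obtain ⟨K, J, hK1, hJ1, hKJ⟩ := aux_ratpick sidx L M a b ha hbpos hsep
  set r : ℝ := a^K * b^J with hrdef
  have hr : 0 < r := by positivity
  have hexp : ∀ x y : ℝ, 0 < x → 0 < y →
      (K:ℝ) * Real.log (x/a) + (J:ℝ) * Real.log (y/b) < 0 → x^K * y^J < r := by
    intro x y hx hy hlt
    have e1 : Real.log (x/a) = Real.log x - Real.log a := Real.log_div hx.ne' ha.ne'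
    have e2 : Real.log (y/b) = Real.log y - Real.log b := Real.log_div hy.ne' hbpos.ne'
    rw [e1, e2] at hlt
    have h1 : Real.log (x^K * y^J) < Real.log (a^K * b^J) := by
      rw [Real.log_mul (by positivity) (by positivity),
          Real.log_mul (by positivity) (by positivity),
          Real.log_pow, Real.log_pow, Real.log_pow, Real.log_pow]
      linarith [hlt]
    have h2 := Real.exp_lt_exp.2 h1
    rwa [Real.exp_log (by positivity), Real.exp_log (by positivity)] at h2
  set sε : ℝ := ε^K * 2^J with hsεdef
  have hsεr : sε < r := hexp ε 2 hε0 (by norm_num)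
    (by simpa [hLdef, hMdef] using hKJ none (Finset.mem_insert_self _ _))
  set TF : Finset ℝ := insert sε (G.image (fun n => ‖μ n‖^K * ‖1 - μ n‖^J)) with hTFdef
  have hTFne : TF.Nonempty := ⟨sε, Finset.mem_insert_self _ _⟩
  set sB : ℝ := TF.max' hTFne with hsBdef
  have hsBlt : sB < r := by
    rw [hsBdef, Finset.max'_lt_iff]
    intro t ht
    rcases Finset.mem_insert.1 ht with rfl|ht'
    · exact hsεr
    · obtain ⟨n, hnG, rfl⟩ := Finset.mem_image.1 ht'
      obtain ⟨hnmem, hn1⟩ := Finset.mem_filter.1 hnG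
      have hx0 : 0 < ‖μ n‖ := norm_pos_iff.2 (hne n)
      have hy0 : 0 < ‖1 - μ n‖ := by
        rw [norm_pos_iff]
        intro h
        exact hn1 (by linear_combination -h)
      apply hexp _ _ hx0 hy0
      simpa [hLdef, hMdef] using hKJ (some n)
        (Finset.mem_insert_of_mem (Finset.mem_image_of_mem some hnG))
  have hsε0 : (0:ℝ) < sε := by positivity
  have hsB0 : 0 < sB :=
    lt_of_lt_of_le hsε0 (Finset.le_max' _ _ (Finset.mem_insert_self _ _))
  have hzB : ∀ n, n ∉ Efin → ‖μ n‖^K * ‖1 - μ n‖^J ≤ sB := by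
    intro n hnE
    by_cases hnF : ε ≤ ‖μ n‖
    · by_cases hn1 : μ n = 1
      · have hz : ‖1 - μ n‖ = 0 := by rw [hn1]; simp
        rw [hz, zero_pow (by omega : J ≠ 0), mul_zero]
        exact hsB0.le
      · apply Finset.le_max'
        apply Finset.mem_insert_of_mem
        apply Finset.mem_image_of_mem
        rw [hGdef, Finset.mem_filter, Finset.mem_sdiff]
        exact ⟨⟨(Set.Finite.mem_toFinset _).2 hnF, hnE⟩, hn1⟩
    · push_neg at hnF
      have h1 : ‖μ n‖^K ≤ ε^K := pow_le_pow_left₀ (norm_nonneg _) hnF.le K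
      have h2 : ‖1 - μ n‖ ≤ 2 := by
        calc ‖1 - μ n‖ ≤ ‖(1:ℂ)‖ + ‖μ n‖ := norm_sub_le _ _
        _ ≤ 2 := by simp only [norm_one]; linarith [hb n]
      have h3 : ‖1 - μ n‖^J ≤ 2^J := pow_le_pow_left₀ (norm_nonneg _) h2 J
      calc ‖μ n‖^K * ‖1 - μ n‖^J ≤ ε^K * 2^J :=
            mul_le_mul h1 h3 (by positivity) (by positivity)
      _ ≤ sB := Finset.le_max' _ _ (Finset.mem_insert_self _ _)
  set z : ℕ → ℂ := fun n => μ n ^ K * (1 - μ n) ^ J with hzdef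
  have hznorm : ∀ n, ‖z n‖ = ‖μ n‖^K * ‖1 - μ n‖^J := fun n => by
    rw [hzdef, norm_mul, norm_pow, norm_pow]
  have hwr : ‖z N‖ = r := by rw [hznorm N, hrdef, hadef, hbdef]
  set u : ℂ := z N / ((r:ℝ):ℂ) with hudef
  have hu1 : ‖u‖ = 1 := by
    rw [hudef, norm_div, hwr, Complex.norm_real, Real.norm_eq_abs, abs_of_pos hr,
      div_self hr.ne']
  have hzsum : Summable (fun n => ‖z n‖) := by
    apply Summable.of_nonneg_of_le (fun n => norm_nonneg _) _ (hs.mul_right (2^J))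
    intro n
    rw [hznorm]
    have h1 : ‖μ n‖^K ≤ ‖μ n‖ := by
      simpa using pow_le_pow_of_le_one (norm_nonneg _) (hb n) hK1
    have h2 : ‖1 - μ n‖ ≤ 2 := by
      calc ‖1 - μ n‖ ≤ ‖(1:ℂ)‖ + ‖μ n‖ := norm_sub_le _ _
      _ ≤ 2 := by simp only [norm_one]; linarith [hb n]
    have h3 : ‖1 - μ n‖^J ≤ 2^J := pow_le_pow_left₀ (norm_nonneg _) h2 J
    exact mul_le_mul h1 h3 (by positivity) (norm_nonneg _)
  set Z : ℝ := ∑' n, ‖z n‖ with hZdef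
  have hZcompl : ∑' (n : ((Efin : Set ℕ)ᶜ : Set ℕ)), ‖z n‖ ≤ Z := by
    have hsplit := Summable.sum_add_tsum_compl (s := Efin) hzsum
    have h1 : 0 ≤ ∑ n ∈ Efin, ‖z n‖ := Finset.sum_nonneg fun n _ => norm_nonneg _
    rw [hZdef, ← hsplit]
    linarith
  obtain ⟨m, hm1, hmu⟩ := aux_subseq u hu1
  have hmtop : Tendsto m atTop atTop :=
    tendsto_atTop_mono (fun i => by simp only [id_eq]; have := hm1 i; omega) tendsto_id
  -- the main limit claim
  have main : ∀ δ : ℕ, ((∑ n ∈ Efin, μ n ^ δ : ℂ)).im = 0 ∧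
      0 ≤ (∑ n ∈ Efin, μ n ^ δ : ℂ).re := by
    intro δ
    set g : ℂ := ∑ n ∈ Efin, μ n ^ δ with hgdef
    set f : ℕ → ℕ → ℂ := fun i n => μ n ^ (m i * K + δ) * (1 - μ n) ^ (m i * J) with hfdef
    have hmK1 : ∀ i, 1 ≤ m i * K + δ := by
      intro i
      have h1 : 1 * 1 ≤ m i * K := Nat.mul_le_mul (by have := hm1 i; omega) hK1
      omega
    have hfs : ∀ i, Summable (f i) := fun i => aux_sumpow μ hs hb _ _ (hmK1 i)
    have hfnorm : ∀ i, Summable (fun n => ‖f i n‖) := by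
      intro i
      apply Summable.of_nonneg_of_le (fun n => norm_nonneg _) _ (hs.mul_right (2^(m i * J)))
      intro n
      simp only [hfdef]
      rw [norm_mul, norm_pow, norm_pow]
      have h1 : ‖μ n‖^(m i * K + δ) ≤ ‖μ n‖ := by
        simpa using pow_le_pow_of_le_one (norm_nonneg _) (hb n) (hmK1 i)
      have h2 : ‖1 - μ n‖ ≤ 2 := by
        calc ‖1 - μ n‖ ≤ ‖(1:ℂ)‖ + ‖μ n‖ := norm_sub_le _ _
        _ ≤ 2 := by simp only [norm_one]; linarith [hb n]
      have h3 : ‖1 - μ n‖^(m i * J) ≤ 2^(m i * J) := pow_le_pow_left₀ (norm_nonneg _) h2 _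
      exact mul_le_mul h1 h3 (by positivity) (norm_nonneg _)
    set q : ℕ → ℂ := fun i => (∑' n, f i n) / ((r ^ m i : ℝ) : ℂ) with hqdef
    have hq : ∀ i, (q i).im = 0 ∧ 0 ≤ (q i).re := by
      intro i
      obtain ⟨him, hre⟩ := hS (m i * J) (m i * K + δ) (hmK1 i)
      have hrm : (0:ℝ) < r ^ m i := pow_pos hr _
      constructor
      · simp only [hqdef]
        rw [Complex.div_ofReal_im]
        simp only [hfdef]
        rw [him, zero_div]
      · simp only [hqdef]
        rw [Complex.div_ofReal_re]
        apply div_nonneg _ hrm.le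
        simp only [hfdef]
        exact hre
    have hqeq : ∀ i, q i = (∑ n ∈ Efin, f i n) / ((r ^ m i:ℝ):ℂ)
        + (∑' (n : ((Efin : Set ℕ)ᶜ : Set ℕ)), f i n) / ((r ^ m i:ℝ):ℂ) := by
      intro i
      simp only [hqdef]
      rw [← Summable.sum_add_tsum_compl (s := Efin) (hfs i), add_div]
    have hP : Tendsto (fun i => (∑ n ∈ Efin, f i n) / ((r ^ m i:ℝ):ℂ)) atTop (𝓝 g) := by
      have hrw : ∀ i, (∑ n ∈ Efin, f i n) / ((r ^ m i:ℝ):ℂ)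
          = ∑ n ∈ Efin, μ n ^ δ * (z n / ((r:ℝ):ℂ)) ^ m i := by
        intro i
        rw [Finset.sum_div]
        refine Finset.sum_congr rfl fun n _ => ?_
        have hcast : ((r ^ m i : ℝ) : ℂ) = ((r:ℝ):ℂ) ^ m i := by push_cast; ring
        simp only [hfdef, hzdef]
        rw [hcast]
        ring
      have heq : (fun i => (∑ n ∈ Efin, f i n) / ((r ^ m i:ℝ):ℂ))
          = fun i => ∑ n ∈ Efin, μ n ^ δ * (z n / ((r:ℝ):ℂ)) ^ m i := funext hrw
      rw [heq]
      have hlim : Tendsto (fun i => ∑ n ∈ Efin, μ n ^ δ * (z n / ((r:ℝ):ℂ)) ^ m i) atTop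
          (𝓝 (∑ n ∈ Efin, μ n ^ δ * 1)) := by
        apply tendsto_finset_sum
        intro n hn
        apply Tendsto.const_mul
        rcases (hmemE n).1 hn with h|h
        · have heq2 : (fun i => (z n / ((r:ℝ):ℂ)) ^ m i) = fun i => u ^ m i := by
            funext i
            simp only [hudef, hzdef, h]
          rw [heq2]
          exact hmu
        · have hzn : z n = (starRingEnd ℂ) (z N) := by
            simp only [hzdef, h, map_mul, map_pow, map_sub, map_one]
          have heq2 : (fun i => (z n / ((r:ℝ):ℂ)) ^ m i)
              = fun i => (starRingEnd ℂ) (u ^ m i) := by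
            funext i
            rw [hzn, hudef, map_pow, map_div₀, Complex.conj_ofReal]
          rw [heq2]
          have hconj : Tendsto (fun i => (starRingEnd ℂ) (u ^ m i)) atTop
              (𝓝 ((starRingEnd ℂ) 1)) := (Complex.continuous_conj.tendsto _).comp hmu
          simpa using hconj
      simpa using hlim
    have hT : Tendsto (fun i => (∑' (n : ((Efin : Set ℕ)ᶜ : Set ℕ)), f i n) / ((r ^ m i:ℝ):ℂ))
        atTop (𝓝 0) := by
      apply squeeze_zero_norm (a := fun i => (Z / sB) * (sB / r) ^ m i)
      · intro i
        have hrm : (0:ℝ) < r ^ m i := pow_pos hr _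
        rw [norm_div, Complex.norm_real, Real.norm_eq_abs, abs_of_pos hrm]
        have hper : ∀ (n : ((Efin : Set ℕ)ᶜ : Set ℕ)), ‖f i n‖ ≤ sB ^ (m i - 1) * ‖z n‖ := by
          rintro ⟨n, hn⟩
          have hnE : n ∉ Efin := hn
          have hP0 : (0:ℝ) ≤ ‖μ n‖^K * ‖1 - μ n‖^J := by positivity
          have hPB : ‖μ n‖^K * ‖1 - μ n‖^J ≤ sB := hzB n hnE
          have hval : ‖f i n‖ = ‖μ n‖^δ * (‖μ n‖^K * ‖1 - μ n‖^J) ^ m i := by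
            simp only [hfdef]
            rw [norm_mul, norm_pow, norm_pow]
            ring
          have hδ1 : ‖μ n‖^δ ≤ 1 := pow_le_one₀ (norm_nonneg _) (hb n)
          have hsplit' : (‖μ n‖^K * ‖1 - μ n‖^J) ^ m i
              ≤ sB ^ (m i - 1) * (‖μ n‖^K * ‖1 - μ n‖^J) := by
            have hmi : m i = (m i - 1) + 1 := by have := hm1 i; omega
            rw [hmi, pow_succ]
            apply mul_le_mul_of_nonneg_right _ hP0
            exact pow_le_pow_left₀ hP0 hPB _
          calc ‖f i n‖ = ‖μ n‖^δ * (‖μ n‖^K * ‖1 - μ n‖^J) ^ m i := hval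
          _ ≤ 1 * ((‖μ n‖^K * ‖1 - μ n‖^J) ^ m i) :=
              mul_le_mul_of_nonneg_right hδ1 (by positivity)
          _ = (‖μ n‖^K * ‖1 - μ n‖^J) ^ m i := one_mul _
          _ ≤ sB ^ (m i - 1) * (‖μ n‖^K * ‖1 - μ n‖^J) := hsplit'
          _ = sB ^ (m i - 1) * ‖z n‖ := by rw [hznorm]
        have hnum : ‖∑' (n : ((Efin : Set ℕ)ᶜ : Set ℕ)), f i n‖ ≤ sB ^ (m i - 1) * Z := by
          calc ‖∑' (n : ((Efin : Set ℕ)ᶜ : Set ℕ)), f i n‖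
              ≤ ∑' (n : ((Efin : Set ℕ)ᶜ : Set ℕ)), ‖f i n‖ :=
                norm_tsum_le_tsum_norm ((hfnorm i).subtype _)
          _ ≤ ∑' (n : ((Efin : Set ℕ)ᶜ : Set ℕ)), sB ^ (m i - 1) * ‖z n‖ :=
                Summable.tsum_le_tsum hper ((hfnorm i).subtype _) ((hzsum.subtype _).mul_left _)
          _ = sB ^ (m i - 1) * ∑' (n : ((Efin : Set ℕ)ᶜ : Set ℕ)), ‖z n‖ := tsum_mul_left
          _ ≤ sB ^ (m i - 1) * Z :=
                mul_le_mul_of_nonneg_left hZcompl (by positivity)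
        have hfinal : sB ^ (m i - 1) * Z / r ^ m i = (Z / sB) * (sB / r) ^ m i := by
          have hmi : m i = (m i - 1) + 1 := by have := hm1 i; omega
          rw [div_pow]
          rw [show sB ^ m i = sB ^ (m i - 1) * sB by rw [← pow_succ, ← hmi]]
          field_simp
        rw [← hfinal]
        gcongr
      · have h1 : Tendsto (fun t : ℕ => (sB/r)^t) atTop (𝓝 0) :=
          tendsto_pow_atTop_nhds_zero_of_lt_one (div_nonneg hsB0.le hr.le)
            ((div_lt_one hr).2 hsBlt)
        have h2 := (h1.comp hmtop).const_mul (Z/sB)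
        simpa using h2
    have hqlim : Tendsto q atTop (𝓝 g) := by
      have heq : q = fun i => (∑ n ∈ Efin, f i n) / ((r ^ m i:ℝ):ℂ)
          + (∑' (n : ((Efin : Set ℕ)ᶜ : Set ℕ)), f i n) / ((r ^ m i:ℝ):ℂ) := funext hqeq
      rw [heq]
      have := hP.add hT
      simpa using this
    constructor
    · have h1 : Tendsto (fun i => (q i).im) atTop (𝓝 g.im) :=
        (Complex.continuous_im.tendsto g).comp hqlim
      have h2 : (fun i => (q i).im) = fun _ => (0:ℝ) := funext fun i => (hq i).1
      rw [h2] at h1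
      exact (tendsto_nhds_unique h1 tendsto_const_nhds)
    · exact ge_of_tendsto' ((Complex.continuous_re.tendsto g).comp hqlim) (fun i => (hq i).2)
  -- final contradiction
  by_cases himN : (μ N).im = 0
  · have hconjN : (starRingEnd ℂ) (μ N) = μ N := Complex.conj_eq_iff_im.2 himN
    have hgval : (∑ n ∈ Efin, μ n ^ 1 : ℂ) = (Efin.card : ℂ) * μ N := by
      have hcongr : ∀ n ∈ Efin, μ n ^ 1 = μ N := by
        intro n hn
        rcases (hmemE n).1 hn with h|h
        · rw [pow_one, h]
        · rw [pow_one, h, hconjN]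
      rw [Finset.sum_congr rfl hcongr, Finset.sum_const, nsmul_eq_mul]
    have hre1 := (main 1).2
    rw [hgval] at hre1
    have hrecard : ((Efin.card : ℂ) * μ N).re = (Efin.card:ℝ) * (μ N).re := by
      simp [Complex.mul_re]
    rw [hrecard] at hre1
    have hcard : 0 < Efin.card := Finset.card_pos.2 ⟨N, hNE⟩
    have hcard' : (0:ℝ) < Efin.card := by exact_mod_cast hcard
    have hreN : (μ N).re < 0 := by
      by_contra hge
      push_neg at hge
      have hre0 : (μ N).re ≠ 0 := by
        intro h0
        exact hne N (Complex.ext h0 himN)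
      have hrepos : 0 < (μ N).re := lt_of_le_of_ne hge (Ne.symm hre0)
      have h1 : μ N = (((μ N).re : ℝ) : ℂ) := Complex.ext rfl (by simp [himN])
      have e1 : a = (μ N).re := by
        rw [hadef]
        conv_lhs => rw [h1]
        rw [Complex.norm_real, Real.norm_eq_abs]
        exact abs_of_pos hrepos
      have hle1 : (μ N).re ≤ 1 := by rw [← e1]; exact ha1
      have e2 : b = 1 - (μ N).re := by
        rw [hbdef]
        have hsub : (1:ℂ) - μ N = (((1 - (μ N).re : ℝ)) : ℂ) := by
          conv_lhs => rw [h1]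
          push_cast
          ring
        rw [hsub, Complex.norm_real, Real.norm_eq_abs]
        exact abs_of_nonneg (by linarith)
      rw [e1, e2] at hab1
      linarith
    have := mul_neg_of_pos_of_neg hcard' hreN
    linarith
  · set E1 : Finset ℕ := Efin.filter (fun n => μ n = μ N) with hE1def
    set E2 : Finset ℕ := Efin.filter (fun n => μ n = (starRingEnd ℂ) (μ N)) with hE2def
    have hdisj : Disjoint E1 E2 := by
      rw [Finset.disjoint_left]
      intro n h1 h2
      have e1 := (Finset.mem_filter.1 h1).2
      have e2 := (Finset.mem_filter.1 h2).2
      apply himN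
      have hcc : μ N = (starRingEnd ℂ) (μ N) := e1.symm.trans e2
      have := congrArg Complex.im hcc
      simp only [Complex.conj_im] at this
      linarith
    have hunion : E1 ∪ E2 = Efin := by
      ext n
      simp only [Finset.mem_union, hE1def, hE2def, Finset.mem_filter]
      constructor
      · rintro (⟨h,_⟩|⟨h,_⟩) <;> exact h
      · intro h
        rcases (hmemE n).1 h with h'|h'
        · exact Or.inl ⟨h, h'⟩
        · exact Or.inr ⟨h, h'⟩
    have hgval : ∀ δ : ℕ, (∑ n ∈ Efin, μ n ^ δ : ℂ)
        = (E1.card : ℂ) * μ N ^ δ + (E2.card : ℂ) * ((starRingEnd ℂ) (μ N)) ^ δ := by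
      intro δ
      rw [← hunion, Finset.sum_union hdisj]
      congr 1
      · rw [Finset.sum_congr rfl (fun n hn => by rw [(Finset.mem_filter.1 hn).2]),
          Finset.sum_const, nsmul_eq_mul]
      · rw [Finset.sum_congr rfl (fun n hn => by rw [(Finset.mem_filter.1 hn).2]),
          Finset.sum_const, nsmul_eq_mul]
    have hc1 : 0 < E1.card := Finset.card_pos.2 ⟨N, Finset.mem_filter.2 ⟨hNE, rfl⟩⟩
    have hc1' : (0:ℝ) < E1.card := by exact_mod_cast hc1
    have him1 := (main 1).1
    rw [hgval 1] at him1
    simp only [pow_one] at him1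
    have hcompute : ((E1.card : ℂ) * μ N + (E2.card:ℂ) * (starRingEnd ℂ) (μ N)).im
        = (E1.card:ℝ) * (μ N).im - (E2.card:ℝ) * (μ N).im := by
      simp [Complex.add_im, Complex.mul_im, Complex.conj_im, Complex.conj_re]
      ring
    rw [hcompute] at him1
    have hc12 : (E1.card : ℝ) = E2.card := by
      have hfac : ((E1.card:ℝ) - E2.card) * (μ N).im = 0 := by linarith
      rcases mul_eq_zero.1 hfac with h|h
      · linarith
      · exact absurd h himN
    have hδre : ∀ δ : ℕ, 0 ≤ (μ N ^ δ).re := by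
      intro δ
      have hre := (main δ).2
      rw [hgval δ] at hre
      have hconjpow : ((starRingEnd ℂ) (μ N)) ^ δ = (starRingEnd ℂ) (μ N ^ δ) :=
        (map_pow _ _ _).symm
      rw [hconjpow] at hre
      have hcal : ((E1.card : ℂ) * μ N ^ δ + (E2.card:ℂ) * (starRingEnd ℂ) (μ N ^ δ)).re
          = (E1.card:ℝ) * (μ N ^ δ).re + (E2.card:ℝ) * (μ N ^ δ).re := by
        simp only [Complex.add_re, Complex.mul_re, Complex.natCast_re, Complex.natCast_im,
          Complex.conj_re, Complex.conj_im]
        ring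
      rw [hcal] at hre
      rw [← hc12] at hre
      by_contra hneg
      push_neg at hneg
      linarith [mul_neg_of_pos_of_neg hc1' hneg]
    obtain ⟨δ, hδ⟩ := aux_re_pow_neg (μ N) himN
    exact absurd (hδre δ) (not_le.2 hδ)

/-- positivity criterion for an absolutely summable complex sequence
in terms of Hausdorff-type moment inequalities on its power sums. -/
theorem positivity_criterion_power_sums
    (lam : ℕ → ℂ) (hsum : Summable fun n => ‖lam n‖)
    (hne : ∀ n, lam n ≠ 0)
    (p : ℕ → ℂ) (hp : ∀ k, 1 ≤ k → p k = ∑' n, lam n ^ k) :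
    (∀ n, (lam n).im = 0 ∧ 0 < (lam n).re) ↔
      ∃ c : ℝ, (∀ n, ‖lam n‖ ≤ c) ∧
        ∀ j k : ℕ,
          (∑ i ∈ Finset.range (j + 1),
              (-1 : ℂ) ^ i * (j.choose i) * p (k + 1 + i) / (c : ℂ) ^ (k + 1 + i)).im = 0 ∧
          0 ≤ (∑ i ∈ Finset.range (j + 1),
              (-1 : ℂ) ^ i * (j.choose i) * p (k + 1 + i) / (c : ℂ) ^ (k + 1 + i)).re := by
  have keyc : ∀ c : ℝ, 0 < c → (∀ n, ‖lam n‖ ≤ c) → ∀ j k : ℕ,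
      (∑ i ∈ Finset.range (j + 1),
          (-1 : ℂ) ^ i * (j.choose i) * p (k + 1 + i) / (c : ℂ) ^ (k + 1 + i))
        = ∑' n, (lam n / c) ^ (k+1) * (1 - lam n / c) ^ j := by
    intro c hc0 hcb j k
    have hcC : (c : ℂ) ≠ 0 := by exact_mod_cast hc0.ne'
    have hsμ : Summable fun n => ‖lam n / (c:ℂ)‖ := by
      have := hsum.div_const c
      refine this.congr fun n => ?_
      rw [norm_div, Complex.norm_real, Real.norm_eq_abs, abs_of_pos hc0]
    have hbμ : ∀ n, ‖lam n / (c:ℂ)‖ ≤ 1 := by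
      intro n
      rw [norm_div, Complex.norm_real, Real.norm_eq_abs, abs_of_pos hc0, div_le_one hc0]
      exact hcb n
    rw [← aux_key_identity _ hsμ hbμ j k]
    refine Finset.sum_congr rfl fun i _ => ?_
    rw [hp (k+1+i) (by omega), mul_div_assoc]
    congr 1
    exact tsum_div_const.symm.trans (tsum_congr fun n => (div_pow _ _ _).symm)
  constructor
  · intro hpos
    set c : ℝ := ∑' n, ‖lam n‖ with hcdef
    have hcb : ∀ n, ‖lam n‖ ≤ c := fun n => Summable.le_tsum hsum n (fun j _ => norm_nonneg _)
    have hc0 : 0 < c := lt_of_lt_of_le (norm_pos_iff.2 (hne 0)) (hcb 0)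
    have hcC : (c : ℂ) ≠ 0 := by exact_mod_cast hc0.ne'
    refine ⟨c, hcb, fun j k => ?_⟩
    rw [keyc c hc0 hcb j k]
    have hsμ : Summable fun n => ‖lam n / (c:ℂ)‖ := by
      have := hsum.div_const c
      refine this.congr fun n => ?_
      rw [norm_div, Complex.norm_real, Real.norm_eq_abs, abs_of_pos hc0]
    have hbμ : ∀ n, ‖lam n / (c:ℂ)‖ ≤ 1 := by
      intro n
      rw [norm_div, Complex.norm_real, Real.norm_eq_abs, abs_of_pos hc0, div_le_one hc0]
      exact hcb n
    have hterm : ∀ n, ∃ t : ℝ, 0 ≤ t ∧ (lam n / c) ^ (k+1) * (1 - lam n / c) ^ j = (t:ℂ) := by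
      intro n
      obtain ⟨him, hre⟩ := hpos n
      have h1 : lam n = (((lam n).re : ℝ) : ℂ) := Complex.ext rfl (by simp [him])
      set x : ℝ := (lam n).re / c with hxdef
      have hx0 : 0 < x := div_pos hre hc0
      have hnorm : ‖lam n‖ = (lam n).re := by
        conv_lhs => rw [h1]
        rw [Complex.norm_real, Real.norm_eq_abs, abs_of_pos hre]
      have hx1 : x ≤ 1 := by
        rw [hxdef, div_le_one hc0, ← hnorm]
        exact hcb n
      refine ⟨x^(k+1) * (1-x)^j, by
        have hx1' : 0 ≤ 1 - x := by linarith
        positivity, ?_⟩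
      have hμn : lam n / (c:ℂ) = ((x:ℝ):ℂ) := by
        rw [hxdef]
        push_cast
        rw [← h1]
      rw [hμn]
      push_cast
      ring
    have hsumT : Summable (fun n => (lam n / (c:ℂ)) ^ (k+1) * (1 - lam n / (c:ℂ))^j) :=
      aux_sumpow _ hsμ hbμ _ _ (by omega)
    constructor
    · rw [Complex.im_tsum hsumT]
      have : ∀ n, ((lam n / (c:ℂ)) ^ (k+1) * (1 - lam n / (c:ℂ))^j).im = 0 := by
        intro n
        obtain ⟨t, _, hteq⟩ := hterm n
        rw [hteq]
        simp
      simp only [this]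
      exact tsum_zero
    · rw [Complex.re_tsum hsumT]
      apply tsum_nonneg
      intro n
      obtain ⟨t, ht0, hteq⟩ := hterm n
      rw [hteq]
      simpa using ht0
  · rintro ⟨c, hcb, hcond⟩
    have hc0 : 0 < c := lt_of_lt_of_le (norm_pos_iff.2 (hne 0)) (hcb 0)
    have hcC : (c : ℂ) ≠ 0 := by exact_mod_cast hc0.ne'
    have hsμ : Summable fun n => ‖lam n / (c:ℂ)‖ := by
      have := hsum.div_const c
      refine this.congr fun n => ?_
      rw [norm_div, Complex.norm_real, Real.norm_eq_abs, abs_of_pos hc0]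
    have hbμ : ∀ n, ‖lam n / (c:ℂ)‖ ≤ 1 := by
      intro n
      rw [norm_div, Complex.norm_real, Real.norm_eq_abs, abs_of_pos hc0, div_le_one hc0]
      exact hcb n
    have hneμ : ∀ n, lam n / (c:ℂ) ≠ 0 := fun n => div_ne_zero (hne n) hcC
    have hSμ : ∀ j k : ℕ, 1 ≤ k →
        (∑' n, (lam n / (c:ℂ)) ^ k * (1 - lam n / (c:ℂ)) ^ j).im = 0 ∧
        0 ≤ (∑' n, (lam n / (c:ℂ)) ^ k * (1 - lam n / (c:ℂ)) ^ j).re := by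
      intro j k hk
      obtain ⟨k', rfl⟩ : ∃ k', k = k' + 1 := ⟨k-1, by omega⟩
      have := hcond j k'
      rwa [keyc c hc0 hcb j k'] at this
    have hres := aux_backward _ hsμ hneμ hbμ hSμ
    intro n
    obtain ⟨him, hre⟩ := hres n
    have heq : lam n = (c:ℂ) * (lam n / (c:ℂ)) := by
      field_simp
    constructor
    · rw [heq]
      simp [Complex.mul_im, him]
    · rw [heq]
      have : ((c:ℂ) * (lam n / (c:ℂ))).re = c * (lam n / (c:ℂ)).re := by
        simp [Complex.mul_re]
      rw [this]
      exact mul_pos hc0 hre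
end

section
/- Let λ : ℕ → ℂ with ∑_n ‖λ_n‖ < ∞. If every elementary symmetric sum e_k (k ≥ 0) is a rational number (i.e. lies in the image of ℚ in ℂ), then every power sum p_k (k ≥ 1) is a rational number. -/
open Complex Finset

section Aux

open MvPolynomial Filter Topology

private lemma psr_esymm_summable (lam : ℕ → ℂ) (hsum : Summable fun n => ‖lam n‖) (k : ℕ) :
    Summable (fun S : {S : Finset ℕ // S.card = k} => ∏ i ∈ S.1, lam i) := by
  apply Summable.of_norm
  apply summable_of_sum_le (c := Real.exp (∑' n, ‖lam n‖))
    (fun S => norm_nonneg _)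
  intro F
  calc ∑ S ∈ F, ‖∏ i ∈ S.1, lam i‖
      = ∑ S ∈ F, ∏ i ∈ S.1, ‖lam i‖ := by simp [norm_prod]
    _ ≤ ∑ T ∈ (F.biUnion fun S => S.1).powerset, ∏ i ∈ T, ‖lam i‖ := by
        rw [show (∑ S ∈ F, ∏ i ∈ (S : Finset ℕ), ‖lam i‖)
            = ∑ T ∈ F.image Subtype.val, ∏ i ∈ T, ‖lam i‖ from
          (Finset.sum_image (g := (Subtype.val : {S : Finset ℕ // S.card = k} → Finset ℕ))
            (f := fun T : Finset ℕ => ∏ i ∈ T, ‖lam i‖)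
            (by intro a _ b _ h; exact Subtype.ext h)).symm]
        apply Finset.sum_le_sum_of_subset_of_nonneg
        · intro T hT
          simp only [Finset.mem_image] at hT
          obtain ⟨S, hS, rfl⟩ := hT
          simp only [Finset.mem_powerset]
          intro i hi
          exact Finset.mem_biUnion.mpr ⟨S, hS, hi⟩
        · intro T _ _
          exact Finset.prod_nonneg fun i _ => norm_nonneg _
    _ = ∏ i ∈ (F.biUnion fun S => S.1), (‖lam i‖ + 1) := by
        rw [Finset.prod_add]
        simp
    _ ≤ ∏ i ∈ (F.biUnion fun S => S.1), Real.exp ‖lam i‖ := by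
        apply Finset.prod_le_prod
        · intro i _; positivity
        · intro i _; linarith [Real.add_one_le_exp ‖lam i‖]
    _ = Real.exp (∑ i ∈ (F.biUnion fun S => S.1), ‖lam i‖) := by
        rw [Real.exp_sum]
    _ ≤ Real.exp (∑' n, ‖lam n‖) := by
        apply Real.exp_le_exp.mpr
        exact Summable.sum_le_tsum _ (fun i _ => norm_nonneg _) hsum

private lemma psr_finite_newton (lam : ℕ → ℂ) (N k : ℕ) (hk : 0 < k) :
    (∑ i ∈ range N, lam i ^ k) = (-1) ^ (k + 1) * k *
      (∑ T ∈ (range N).powersetCard k, ∏ i ∈ T, lam i) -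
    ∑ a ∈ (antidiagonal k).filter (fun a => a.1 ∈ Set.Ioo 0 k),
      (-1) ^ a.1 * (∑ T ∈ (range N).powersetCard a.1, ∏ i ∈ T, lam i) *
        (∑ i ∈ range N, lam i ^ a.2) := by
  classical
  set σ := {x // x ∈ range N}
  set f : σ → ℂ := fun i => lam i.1
  have hpsum : ∀ m, aeval f (psum σ ℂ m) = ∑ i ∈ range N, lam i ^ m := by
    intro m
    rw [psum, map_sum]
    simp only [map_pow, aeval_X]
    rw [← Finset.sum_coe_sort (range N) (fun i => lam i ^ m)]
  have hesymm : ∀ m, aeval f (esymm σ ℂ m) =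
      ∑ T ∈ (range N).powersetCard m, ∏ i ∈ T, lam i := by
    intro m
    rw [esymm, map_sum]
    simp only [map_prod, aeval_X]
    have hmap : (range N).powersetCard m
        = (univ.powersetCard m).map
          (Finset.mapEmbedding (Function.Embedding.subtype (· ∈ range N))).toEmbedding := by
      rw [← Finset.powersetCard_map]
      congr 1
      rw [Finset.univ_eq_attach, Finset.attach_map_val]
    rw [hmap, Finset.sum_map]
    apply Finset.sum_congr rfl
    intro t _
    rw [show (Finset.mapEmbedding (Function.Embedding.subtype (· ∈ range N))).toEmbedding t
        = t.map (Function.Embedding.subtype (· ∈ range N)) from rfl, Finset.prod_map]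
    rfl
  have h := congrArg (aeval f) (psum_eq_mul_esymm_sub_sum σ ℂ k hk)
  rw [map_sub, map_mul, map_mul, map_pow, map_neg, map_one, map_natCast, map_sum] at h
  simp only [map_mul, map_pow, map_neg, map_one, hpsum, hesymm] at h
  exact h

private lemma psr_esymm_tendsto (lam : ℕ → ℂ) (k : ℕ)
    (hsummE : Summable (fun S : {S : Finset ℕ // S.card = k} => ∏ i ∈ S.1, lam i)) :
    Tendsto (fun N => ∑ T ∈ (range N).powersetCard k, ∏ i ∈ T, lam i) atTop
      (𝓝 (∑' S : {S : Finset ℕ // S.card = k}, ∏ i ∈ S.1, lam i)) := by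
  classical
  set t : ℕ → Finset {S : Finset ℕ // S.card = k} :=
    fun N => ((range N).powersetCard k).subtype (fun S => S.card = k) with ht
  have hmono : Monotone t := fun M N h =>
    Finset.subtype_mono (Finset.powersetCard_mono (Finset.range_subset_range.mpr h))
  have hex : ∀ S : {S : Finset ℕ // S.card = k}, ∃ N, S ∈ t N := by
    intro S
    refine ⟨S.1.sup id + 1, ?_⟩
    rw [ht]
    simp only [Finset.mem_subtype, Finset.mem_powersetCard]
    refine ⟨fun i hi => Finset.mem_range.mpr ?_, S.2⟩
    exact Nat.lt_succ_of_le (Finset.le_sup (f := id) hi)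
  have htend := hsummE.hasSum.comp (tendsto_atTop_finset_of_monotone hmono hex)
  refine htend.congr fun N => ?_
  simp only [Function.comp_apply, ht]
  rw [Finset.sum_subtype_eq_sum_filter (fun T => ∏ i ∈ T, lam i)]
  apply Finset.sum_congr
  · rw [Finset.filter_true_of_mem]
    intro T hT
    exact (Finset.mem_powersetCard.mp hT).2
  · intros; rfl

end Aux

/-- if all elementary symmetric sums of an absolutely summable complex
sequence are rational, then so are all its power sums. -/
theorem power_sums_rational_of_elementary_rational
    (lam : ℕ → ℂ) (hsum : Summable fun n => ‖lam n‖)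
    (p : ℕ → ℂ) (hp : ∀ k, 1 ≤ k → p k = ∑' n, lam n ^ k)
    (e : ℕ → ℂ) (he : ∀ k, e k = ∑' S : {S : Finset ℕ // S.card = k}, ∏ i ∈ S.1, lam i)
    (hrat : ∀ k : ℕ, ∃ q : ℚ, e k = (q : ℂ)) :
    ∀ k : ℕ, 1 ≤ k → ∃ q : ℚ, p k = (q : ℂ) := by
  classical
  open Filter Topology in
  have hE : ∀ k, Tendsto (fun N => ∑ T ∈ (range N).powersetCard k, ∏ i ∈ T, lam i)
      atTop (𝓝 (e k)) := by
    intro k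
    rw [he k]
    exact psr_esymm_tendsto lam k (psr_esymm_summable lam hsum k)
  have hP : ∀ k, 1 ≤ k → Tendsto (fun N => ∑ i ∈ range N, lam i ^ k) atTop (𝓝 (p k)) := by
    intro k hk
    have h1 : ∀ᶠ n in atTop, ‖lam n‖ < 1 :=
      hsum.tendsto_atTop_zero.eventually (gt_mem_nhds one_pos)
    have hsp : Summable (fun n => lam n ^ k) := by
      apply Summable.of_norm
      apply hsum.of_norm_bounded_eventually_nat
      filter_upwards [h1] with n hn
      rw [norm_norm, norm_pow]
      exact pow_le_of_le_one (norm_nonneg _) hn.le (by omega)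
    rw [hp k hk]
    exact hsp.hasSum.tendsto_sum_nat
  have key : ∀ k, 1 ≤ k → p k = (-1) ^ (k + 1) * k * e k -
      ∑ a ∈ (antidiagonal k).filter (fun a => a.1 ∈ Set.Ioo 0 k),
        (-1) ^ a.1 * e a.1 * p a.2 := by
    intro k hk
    have hR : Tendsto (fun N => (-1 : ℂ) ^ (k + 1) * k *
        (∑ T ∈ (range N).powersetCard k, ∏ i ∈ T, lam i) -
      ∑ a ∈ (antidiagonal k).filter (fun a => a.1 ∈ Set.Ioo 0 k),
        (-1) ^ a.1 * (∑ T ∈ (range N).powersetCard a.1, ∏ i ∈ T, lam i) *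
          (∑ i ∈ range N, lam i ^ a.2)) atTop
      (𝓝 ((-1) ^ (k + 1) * k * e k -
        ∑ a ∈ (antidiagonal k).filter (fun a => a.1 ∈ Set.Ioo 0 k),
          (-1) ^ a.1 * e a.1 * p a.2)) := by
      apply Tendsto.sub
      · exact (hE k).const_mul _
      · apply tendsto_finset_sum
        intro a ha
        simp only [Finset.mem_filter, Finset.HasAntidiagonal.mem_antidiagonal, Set.mem_Ioo] at ha
        have ha2 : 1 ≤ a.2 := by omega
        exact (((hE a.1).const_mul _).mul (hP a.2 ha2))
    have hL : Tendsto (fun N => ∑ i ∈ range N, lam i ^ k) atTop (𝓝 (p k)) := hP k hk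
    have heq : (fun N => ∑ i ∈ range N, lam i ^ k) = (fun N => (-1 : ℂ) ^ (k + 1) * k *
        (∑ T ∈ (range N).powersetCard k, ∏ i ∈ T, lam i) -
      ∑ a ∈ (antidiagonal k).filter (fun a => a.1 ∈ Set.Ioo 0 k),
        (-1) ^ a.1 * (∑ T ∈ (range N).powersetCard a.1, ∏ i ∈ T, lam i) *
          (∑ i ∈ range N, lam i ^ a.2)) := by
      funext N
      exact psr_finite_newton lam N k hk
    rw [heq] at hL
    exact tendsto_nhds_unique hL hR
  intro k
  induction k using Nat.strong_induction_on with
  | _ k ih =>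
    intro hk
    have hmem : p k ∈ (Rat.castHom ℂ).range := by
      rw [key k hk]
      apply sub_mem
      · apply mul_mem (mul_mem (pow_mem (neg_mem (one_mem _)) _) ?_) ?_
        · exact natCast_mem _ k
        · obtain ⟨q, hq⟩ := hrat k
          exact ⟨q, hq.symm⟩
      · apply sum_mem
        intro a ha
        simp only [Finset.mem_filter, Finset.HasAntidiagonal.mem_antidiagonal, Set.mem_Ioo] at ha
        have h1 : a.2 < k := by omega
        have h2 : 1 ≤ a.2 := by omega
        apply mul_mem (mul_mem (pow_mem (neg_mem (one_mem _)) _) ?_) ?_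
        · obtain ⟨q, hq⟩ := hrat a.1
          exact ⟨q, hq.symm⟩
        · obtain ⟨q, hq⟩ := ih a.2 h1 h2
          exact ⟨q, hq.symm⟩
    obtain ⟨q, hq⟩ := hmem
    exact ⟨q, hq.symm⟩
end

section
/- Let λ : ℕ → ℂ with ∑_n ‖λ_n‖ < ∞. Then for every integer k ≥ 1, p_k = ∑ (−1)^k · k · (r_1 + r_2 + ⋯ + r_k − 1)! / (r_1! r_2! ⋯ r_k!) · ∏_{i=1}^{k} (−e_i)^{r_i}, where the sum ranges over all tuples (r_1, …, r_k) of nonnegative integers satisfying r_1 + 2r_2 + ⋯ + k·r_k = k. -/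
open Complex Finset Nat
open scoped Topology

namespace WaringAux

noncomputable def Esymm {σ : Type*} [Fintype σ] (f : σ → ℂ) (j : ℕ) : ℂ :=
  ∑ t ∈ powersetCard j (univ : Finset σ), ∏ i ∈ t, f i

def PS (m : ℕ) : Finset (Multiset ℕ) :=
  (Finset.univ : Finset (Nat.Partition m)).image Nat.Partition.parts

lemma mem_PS {m : ℕ} {μ : Multiset ℕ} :
    μ ∈ PS m ↔ (∀ i ∈ μ, 0 < i) ∧ μ.sum = m := by
  constructor
  · rintro h
    simp only [PS, mem_image, mem_univ, true_and] at h
    obtain ⟨p, rfl⟩ := h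
    exact ⟨fun i hi => p.parts_pos hi, p.parts_sum⟩
  · rintro ⟨h1, h2⟩
    simp only [PS, mem_image, mem_univ, true_and]
    exact ⟨⟨μ, fun hi => h1 _ hi, h2⟩, rfl⟩

def Rd (μ : Multiset ℕ) : ℕ := ∏ i ∈ μ.toFinset, (μ.count i)!

lemma Rd_pos (μ : Multiset ℕ) : 0 < Rd μ :=
  Finset.prod_pos fun i _ => Nat.factorial_pos _

lemma Rd_ne_zero (μ : Multiset ℕ) : ((Rd μ : ℂ)) ≠ 0 := by
  exact_mod_cast Nat.cast_ne_zero.mpr (Rd_pos μ).ne'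

noncomputable def coeffW (m : ℕ) (μ : Multiset ℕ) : ℂ :=
  (-1) ^ m * m * ((Multiset.card μ - 1)! : ℕ) / (Rd μ : ℂ)

lemma Rd_erase {μ : Multiset ℕ} {j : ℕ} (hj : j ∈ μ) :
    Rd μ = μ.count j * Rd (μ.erase j) := by
  have hcnt : 0 < μ.count j := Multiset.count_pos.mpr hj
  have hsub : (μ.erase j).toFinset ⊆ μ.toFinset :=
    Multiset.toFinset_subset.mpr (Multiset.erase_subset _ _)
  have hRe : Rd (μ.erase j) = ∏ i ∈ μ.toFinset, ((μ.erase j).count i)! := by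
    refine Finset.prod_subset hsub fun x _ hx => ?_
    rw [Multiset.count_eq_zero.mpr (by simpa using hx)]; rfl
  rw [Rd, hRe, ← Finset.mul_prod_erase _ _ (Multiset.mem_toFinset.mpr hj),
    ← Finset.mul_prod_erase _ (fun i => ((μ.erase j).count i)!) (Multiset.mem_toFinset.mpr hj),
    Multiset.count_erase_self, ← mul_assoc, Nat.mul_factorial_pred hcnt.ne']
  congr 1
  exact Finset.prod_congr rfl fun x hx =>
    congrArg _ (Multiset.count_erase_of_ne (Finset.mem_erase.mp hx).1 μ).symm

lemma card_le_sum {μ : Multiset ℕ} (h : ∀ i ∈ μ, 0 < i) : Multiset.card μ ≤ μ.sum := by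
  calc Multiset.card μ = (μ.map fun _ => 1).sum := by simp
  _ ≤ (μ.map id).sum := Multiset.sum_map_le_sum_map _ _ (fun i hi => h i hi)
  _ = μ.sum := by simp

lemma sum_eq_toFinset_sum (μ : Multiset ℕ) :
    μ.sum = ∑ j ∈ μ.toFinset, μ.count j * j := by
  conv_lhs => rw [← Multiset.toFinset_sum_count_nsmul_eq μ]
  rw [Multiset.sum_sum]
  exact Finset.sum_congr rfl fun j _ => by rw [Multiset.nsmul_singleton, Multiset.sum_replicate, smul_eq_mul, mul_comm]

lemma aeval_esymm {σ : Type*} [Fintype σ] (f : σ → ℂ) (j : ℕ) :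
    (MvPolynomial.aeval f) (MvPolynomial.esymm σ ℂ j) = Esymm f j := by
  rw [MvPolynomial.aeval_esymm_eq_multiset_esymm, Finset.esymm_map_val]
  rfl

lemma newton_numeric {σ : Type*} [Fintype σ] [DecidableEq σ] (f : σ → ℂ) (k : ℕ) (hk : 0 < k) :
    ∑ i, f i ^ k = (-1) ^ (k + 1) * k * Esymm f k -
      ∑ a ∈ filter (fun a => a.1 ∈ Set.Ioo 0 k) (antidiagonal k),
        (-1) ^ a.1 * Esymm f a.1 * ∑ i, f i ^ a.2 := by
  have h := congrArg (MvPolynomial.aeval f) (MvPolynomial.psum_eq_mul_esymm_sub_sum σ ℂ k hk)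
  simp only [map_sub, map_mul, map_sum, map_pow, map_neg, map_one, map_natCast, aeval_esymm, MvPolynomial.psum, MvPolynomial.aeval_X] at h
  simpa using h

lemma coeff_rec {k : ℕ} {μ : Multiset ℕ} (hμ : μ ∈ PS k) (hc : 2 ≤ Multiset.card μ) :
    ∑ j ∈ μ.toFinset, (-1 : ℂ) ^ j * coeffW (k - j) (μ.erase j) = coeffW k μ := by
  obtain ⟨hpos, hsum⟩ := mem_PS.mp hμ
  have hfacts : ∀ j ∈ μ.toFinset, 0 < j ∧ j < k ∧ j + (μ.erase j).sum = k := by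
    intro j hj
    have hjm : j ∈ μ := Multiset.mem_toFinset.mp hj
    have hcons : j + (μ.erase j).sum = k := by
      rw [← hsum]
      conv_rhs => rw [← Multiset.cons_erase hjm]
      rw [Multiset.sum_cons]
    have hce : 1 ≤ Multiset.card (μ.erase j) := by
      rw [Multiset.card_erase_of_mem hjm, Nat.pred_eq_sub_one]; omega
    have herase_pos : ∀ i ∈ μ.erase j, 0 < i := fun i hi =>
      hpos i (Multiset.mem_of_mem_erase hi)
    have hs1 : 1 ≤ (μ.erase j).sum := le_trans hce (card_le_sum herase_pos)
    refine ⟨hpos j hjm, ?_, hcons⟩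
    omega
  have hterm : ∀ j ∈ μ.toFinset, (-1 : ℂ) ^ j * coeffW (k - j) (μ.erase j)
      = (-1 : ℂ) ^ k * (((Multiset.card μ - 2)! : ℕ) : ℂ) / (Rd μ : ℂ)
        * (((k - j) * μ.count j : ℕ) : ℂ) := by
    intro j hj
    obtain ⟨hj0, hjk, hje⟩ := hfacts j hj
    have hjm : j ∈ μ := Multiset.mem_toFinset.mp hj
    have hcnt : 0 < μ.count j := Multiset.count_pos.mpr hjm
    have hcard : Multiset.card (μ.erase j) = Multiset.card μ - 1 :=
      Multiset.card_erase_of_mem hjm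
    have hpow : (-1 : ℂ) ^ j * (-1 : ℂ) ^ (k - j) = (-1 : ℂ) ^ k := by
      rw [← pow_add]; congr 1; omega
    have hRd : (Rd μ : ℂ) = (μ.count j : ℂ) * (Rd (μ.erase j) : ℂ) := by
      exact_mod_cast congrArg (Nat.cast : ℕ → ℂ) (Rd_erase hjm)
    have hcnt' : (μ.count j : ℂ) ≠ 0 := Nat.cast_ne_zero.mpr hcnt.ne'
    have hRe' : ((Rd (μ.erase j) : ℂ)) ≠ 0 := Rd_ne_zero _
    rw [coeffW, hcard, show Multiset.card μ - 1 - 1 = Multiset.card μ - 2 by omega, hRd]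
    push_cast
    field_simp
    linear_combination ((k - j : ℕ) : ℂ) * (((Multiset.card μ - 2)! : ℕ) : ℂ) * hpow
  rw [Finset.sum_congr rfl hterm, ← Finset.mul_sum, ← Nat.cast_sum]
  have hkey : ∑ j ∈ μ.toFinset, (k - j) * μ.count j = k * (Multiset.card μ - 1) := by
    have h1 : ∑ j ∈ μ.toFinset, ((k - j) * μ.count j + j * μ.count j)
        = k * Multiset.card μ := by
      rw [← Multiset.toFinset_sum_count_eq μ, Finset.mul_sum]
      refine Finset.sum_congr rfl fun j hj => ?_
      have := (hfacts j hj).2.1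
      rw [← add_mul, Nat.sub_add_cancel (by omega)]
    rw [Finset.sum_add_distrib] at h1
    have h2 : ∑ j ∈ μ.toFinset, j * μ.count j = k := by
      rw [← hsum, sum_eq_toFinset_sum μ]
      exact Finset.sum_congr rfl fun j _ => mul_comm _ _
    have h3 : k * (Multiset.card μ - 1) + k = k * Multiset.card μ := by
      obtain ⟨m, hm⟩ := Nat.exists_eq_add_of_le hc
      rw [hm, show 2 + m - 1 = m + 1 by omega]
      ring
    omega
  have hfact : (Multiset.card μ - 1) * (Multiset.card μ - 2)! = (Multiset.card μ - 1)! := by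
    have := Nat.mul_factorial_pred (n := Multiset.card μ - 1) (by omega)
    rwa [show Multiset.card μ - 1 - 1 = Multiset.card μ - 2 by omega] at this
  rw [hkey, coeffW, ← hfact]
  push_cast
  ring

lemma finite_waring {σ : Type*} [Fintype σ] [DecidableEq σ] (f : σ → ℂ) :
    ∀ k, 0 < k → ∑ i, f i ^ k
      = ∑ μ ∈ PS k, coeffW k μ * (μ.map fun j => -Esymm f j).prod := by
  intro k
  induction k using Nat.strong_induction_on with
  | _ k IH =>
  intro hk
  set q : ℕ → ℂ := fun j => -Esymm f j with hq
  set A := filter (fun a => a.1 ∈ Set.Ioo 0 k) (antidiagonal k) with hA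
  have hAmem : ∀ a ∈ A, a.1 + a.2 = k ∧ 0 < a.1 ∧ a.1 < k := by
    intro a ha
    simp only [hA, mem_filter, Finset.HasAntidiagonal.mem_antidiagonal, Set.mem_Ioo] at ha
    exact ⟨ha.1, ha.2.1, ha.2.2⟩
  have hDS : ∑ a ∈ A, (-1 : ℂ) ^ a.1 * Esymm f a.1 * ∑ i, f i ^ a.2
      = -∑ a ∈ A, ∑ μ' ∈ PS a.2,
          (-1 : ℂ) ^ a.1 * coeffW a.2 μ' * ((a.1 ::ₘ μ').map q).prod := by
    rw [← Finset.sum_neg_distrib]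
    refine Finset.sum_congr rfl fun a ha => ?_
    obtain ⟨hsum, h0, hlt⟩ := hAmem a ha
    rw [IH a.2 (by omega) (by omega), Finset.mul_sum, ← Finset.sum_neg_distrib]
    refine Finset.sum_congr rfl fun μ' hμ' => ?_
    rw [Multiset.map_cons, Multiset.prod_cons]
    simp only [hq]
    ring
  rw [newton_numeric f k hk, hDS, sub_neg_eq_add, Finset.sum_sigma']
  -- split the target sum
  have h1 : (PS k).filter (fun μ => Multiset.card μ = 1) = {({k} : Multiset ℕ)} := by
    ext μ
    simp only [mem_filter, Finset.mem_singleton, mem_PS]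
    constructor
    · rintro ⟨⟨hpos, hsum⟩, hcard⟩
      obtain ⟨a, rfl⟩ := Multiset.card_eq_one.mp hcard
      simpa using hsum
    · rintro rfl
      refine ⟨⟨fun i hi => ?_, by simp⟩, by simp⟩
      simp only [Multiset.mem_singleton] at hi
      omega
  have hsing : coeffW k {k} * (({k} : Multiset ℕ).map q).prod = (-1) ^ (k + 1) * k * Esymm f k := by
    simp only [coeffW, Rd, Multiset.toFinset_singleton, Multiset.card_singleton,
      Multiset.map_singleton, Multiset.prod_singleton, hq]
    simp [pow_succ, Nat.factorial]
  rw [← Finset.sum_filter_add_sum_filter_not (PS k) (fun μ => Multiset.card μ = 1)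
      (fun μ => coeffW k μ * (μ.map q).prod), h1, Finset.sum_singleton, hsing]
  congr 1
  -- now the main bijection
  have h2 : ∀ μ ∈ (PS k).filter (fun μ => ¬Multiset.card μ = 1), 2 ≤ Multiset.card μ := by
    intro μ hμ
    obtain ⟨⟨hpos, hsum⟩, hcard⟩ := mem_filter.mp hμ |>.imp mem_PS.mp id
    have : μ ≠ 0 := by
      rintro rfl
      simp at hsum; omega
    have := Multiset.card_pos.mpr this
    omega
  have step1 : ∑ μ ∈ (PS k).filter (fun μ => ¬Multiset.card μ = 1),
        coeffW k μ * (μ.map q).prod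
      = ∑ x ∈ ((PS k).filter (fun μ => ¬Multiset.card μ = 1)).sigma
            (fun μ => μ.toFinset),
          (-1 : ℂ) ^ x.2 * coeffW (k - x.2) (x.1.erase x.2) * ((x.1).map q).prod := by
    rw [Finset.sum_sigma]
    refine Finset.sum_congr rfl fun μ hμ => ?_
    dsimp only
    rw [← Finset.sum_mul, coeff_rec (mem_filter.mp hμ).1 (h2 μ hμ)]
  rw [step1]
  symm
  refine Finset.sum_nbij' (i := fun x => (⟨(x.2, k - x.2), x.1.erase x.2⟩ :
      (_ : ℕ × ℕ) × Multiset ℕ)) (j := fun y => ⟨y.1.1 ::ₘ y.2, y.1.1⟩) ?_ ?_ ?_ ?_ ?_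
  · rintro ⟨μ, j⟩ hx
    rw [Finset.mem_sigma] at hx
    obtain ⟨hμF, hjt⟩ := hx
    have hμPS := (mem_filter.mp hμF).1
    obtain ⟨hpos, hsum⟩ := mem_PS.mp hμPS
    have hjm : j ∈ μ := Multiset.mem_toFinset.mp hjt
    have hcons : j + (μ.erase j).sum = k := by
      rw [← hsum]
      conv_rhs => rw [← Multiset.cons_erase hjm]
      rw [Multiset.sum_cons]
    have hce : 1 ≤ Multiset.card (μ.erase j) := by
      rw [Multiset.card_erase_of_mem hjm, Nat.pred_eq_sub_one]
      have := h2 μ hμF; omega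
    have hs1 : 1 ≤ (μ.erase j).sum :=
      le_trans hce (card_le_sum fun i hi => hpos i (Multiset.mem_of_mem_erase hi))
    have hj0 := hpos j hjm
    rw [Finset.mem_sigma]
    constructor
    · show (j, k - j) ∈ A
      simp only [hA, mem_filter, Finset.HasAntidiagonal.mem_antidiagonal, Set.mem_Ioo]
      refine ⟨by omega, by omega, by omega⟩
    · show μ.erase j ∈ PS (k - j)
      rw [mem_PS]
      exact ⟨fun i hi => hpos i (Multiset.mem_of_mem_erase hi), by omega⟩
  · rintro ⟨a, μ'⟩ hy
    rw [Finset.mem_sigma] at hy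
    obtain ⟨haA, hμ'⟩ := hy
    obtain ⟨hsum, h0, hlt⟩ := hAmem a haA
    obtain ⟨hpos', hsum'⟩ := mem_PS.mp hμ'
    have hsum'' : μ'.sum = a.2 := hsum'
    have hne : μ' ≠ 0 := by rintro rfl; simp at hsum''; omega
    rw [Finset.mem_sigma]
    constructor
    · show a.1 ::ₘ μ' ∈ filter (fun μ => ¬Multiset.card μ = 1) (PS k)
      refine mem_filter.mpr ⟨mem_PS.mpr ⟨?_, ?_⟩, ?_⟩
      · intro i hi
        rcases Multiset.mem_cons.mp hi with rfl | hi
        · omega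
        · exact hpos' i hi
      · rw [Multiset.sum_cons]; omega
      · rw [Multiset.card_cons]
        have := Multiset.card_pos.mpr hne
        omega
    · show a.1 ∈ (a.1 ::ₘ μ').toFinset
      exact Multiset.mem_toFinset.mpr (Multiset.mem_cons_self _ _)
  · rintro ⟨μ, j⟩ hx
    rw [Finset.mem_sigma] at hx
    have hjm : j ∈ μ := Multiset.mem_toFinset.mp hx.2
    show (⟨j ::ₘ μ.erase j, j⟩ : (_ : Multiset ℕ) × ℕ) = ⟨μ, j⟩
    rw [Multiset.cons_erase hjm]
  · rintro ⟨a, μ'⟩ hy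
    rw [Finset.mem_sigma] at hy
    obtain ⟨hsum, h0, hlt⟩ := hAmem a hy.1
    show (⟨(a.1, k - a.1), (a.1 ::ₘ μ').erase a.1⟩ : (_ : ℕ × ℕ) × Multiset ℕ) = ⟨a, μ'⟩
    rw [Multiset.erase_cons_head, show k - a.1 = a.2 by omega, Prod.mk.eta]
  · rintro ⟨μ, j⟩ hx
    rw [Finset.mem_sigma] at hx
    have hjm : j ∈ μ := Multiset.mem_toFinset.mp hx.2
    show (-1 : ℂ) ^ j * coeffW (k - j) (μ.erase j) * (Multiset.map q μ).prod
      = (-1 : ℂ) ^ j * coeffW (k - j) (μ.erase j)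
        * (Multiset.map q (j ::ₘ μ.erase j)).prod
    rw [Multiset.cons_erase hjm]

lemma prodq_finsum {α : Type*} (s : Finset α) (f : α → Multiset ℕ) (q : ℕ → ℂ) :
    ((∑ x ∈ s, f x).map q).prod = ∏ x ∈ s, ((f x).map q).prod := by
  induction s using Finset.cons_induction with
  | empty => simp
  | cons a s ha ih => rw [Finset.sum_cons, Finset.prod_cons, Multiset.map_add,
      Multiset.prod_add, ih]

lemma card_finsum {α : Type*} (s : Finset α) (f : α → Multiset ℕ) :
    Multiset.card (∑ x ∈ s, f x) = ∑ x ∈ s, Multiset.card (f x) := by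
  induction s using Finset.cons_induction with
  | empty => simp
  | cons a s ha ih => rw [Finset.sum_cons, Finset.sum_cons, Multiset.card_add, ih]

section
variable {k : ℕ}

def mur (r : Fin k → ℕ) : Multiset ℕ := ∑ i : Fin k, Multiset.replicate (r i) ((i : ℕ) + 1)

lemma count_mur (r : Fin k → ℕ) (i0 : Fin k) : (mur r).count ((i0 : ℕ) + 1) = r i0 := by
  have h : ∀ i ∈ univ, Multiset.count ((i0 : ℕ) + 1)
      (Multiset.replicate (r i) ((i : ℕ) + 1)) = if i = i0 then r i else 0 := by
    intro i _
    rw [Multiset.count_replicate]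
    by_cases h : i = i0
    · subst h; simp
    · rw [if_neg (fun hc => h (Fin.ext (by omega))), if_neg h]
  rw [mur, Multiset.count_sum', Finset.sum_congr rfl h, Finset.sum_ite_eq' univ i0 r]
  simp

lemma count_mur0 (r : Fin k → ℕ) (j : ℕ) (hj : ∀ i : Fin k, (i : ℕ) + 1 ≠ j) :
    (mur r).count j = 0 := by
  rw [mur, Multiset.count_sum']
  exact Finset.sum_eq_zero fun i _ => by rw [Multiset.count_replicate, if_neg (hj i)]

lemma mem_mur {r : Fin k → ℕ} {a : ℕ} (ha : a ∈ mur r) : ∃ i : Fin k, a = (i : ℕ) + 1 := by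
  rw [mur] at ha
  rw [Multiset.mem_sum] at ha
  obtain ⟨i, _, hi⟩ := ha
  exact ⟨i, Multiset.eq_of_mem_replicate hi⟩

lemma sum_mur (r : Fin k → ℕ) : (mur r).sum = ∑ i : Fin k, ((i : ℕ) + 1) * r i := by
  rw [mur, Multiset.sum_sum]
  exact Finset.sum_congr rfl fun i _ => by
    rw [Multiset.sum_replicate, smul_eq_mul, mul_comm]

lemma card_mur (r : Fin k → ℕ) : Multiset.card (mur r) = ∑ i : Fin k, r i := by
  rw [mur, card_finsum]
  exact Finset.sum_congr rfl fun i _ => Multiset.card_replicate _ _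

lemma Rd_mur (r : Fin k → ℕ) : Rd (mur r) = ∏ i : Fin k, (r i)! := by
  have hinj : Function.Injective (fun i : Fin k => (i : ℕ) + 1) :=
    fun a b h => Fin.val_injective (Nat.succ_injective h)
  have hsub : (mur r).toFinset ⊆ univ.image (fun i : Fin k => (i : ℕ) + 1) := by
    intro j hj
    obtain ⟨i, rfl⟩ := mem_mur (Multiset.mem_toFinset.mp hj)
    exact Finset.mem_image.mpr ⟨i, mem_univ _, rfl⟩
  rw [Rd, Finset.prod_subset hsub (fun j _ hj => by
    rw [Multiset.count_eq_zero.mpr (fun hc => hj (Multiset.mem_toFinset.mpr hc))]; rfl),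
    Finset.prod_image (fun a _ b _ h => hinj h)]
  exact Finset.prod_congr rfl fun i _ => by rw [count_mur]

lemma prod_mur (r : Fin k → ℕ) (q : ℕ → ℂ) :
    ((mur r).map q).prod = ∏ i : Fin k, q ((i : ℕ) + 1) ^ r i := by
  rw [mur, prodq_finsum]
  exact Finset.prod_congr rfl fun i _ => by
    rw [Multiset.map_replicate, Multiset.prod_replicate]

end

lemma tuple_form (k : ℕ) (hk : 0 < k) (q : ℕ → ℂ) :
    ∑ μ ∈ PS k, coeffW k μ * (μ.map q).prod
    = ∑ r ∈ (Fintype.piFinset fun _ : Fin k => Finset.range (k + 1)).filter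
          (fun r => ∑ i : Fin k, ((i : ℕ) + 1) * r i = k),
        (-1 : ℂ) ^ k * k * (((∑ i : Fin k, r i) - 1)! : ℕ) / ((∏ i : Fin k, (r i)! : ℕ) : ℂ) *
          ∏ i : Fin k, (q ((i : ℕ) + 1)) ^ (r i) := by
  symm
  refine Finset.sum_nbij' (i := fun r => mur r)
    (j := fun μ => fun i : Fin k => μ.count ((i : ℕ) + 1)) ?_ ?_ ?_ ?_ ?_
  · intro r hr
    obtain ⟨-, hcond⟩ := mem_filter.mp hr
    rw [mem_PS]
    constructor
    · intro a ha
      obtain ⟨i, rfl⟩ := mem_mur ha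
      omega
    · rw [sum_mur]; exact hcond
  · intro μ hμ
    obtain ⟨hpos, hsum⟩ := mem_PS.mp hμ
    have hle : ∀ j, μ.count j ≤ k := fun j =>
      le_trans (Multiset.count_le_card _ _) (by rw [← hsum]; exact card_le_sum hpos)
    have hmem : ∀ j ∈ μ, ∃ i : Fin k, (i : ℕ) + 1 = j := by
      intro j hj
      have h1 := hpos j hj
      have h2 : j ≤ k := by
        rw [← hsum]; exact Multiset.single_le_sum (fun x _ => Nat.zero_le x) j hj
      exact ⟨⟨j - 1, by omega⟩, by simp; omega⟩
    rw [mem_filter]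
    constructor
    · rw [Fintype.mem_piFinset]
      exact fun i => Finset.mem_range.mpr (Nat.lt_succ_of_le (hle _))
    · have hsub : μ.toFinset ⊆ univ.image (fun i : Fin k => (i : ℕ) + 1) := by
        intro j hj
        obtain ⟨i, hi⟩ := hmem j (Multiset.mem_toFinset.mp hj)
        exact Finset.mem_image.mpr ⟨i, mem_univ _, hi⟩
      have hinj : Function.Injective (fun i : Fin k => (i : ℕ) + 1) :=
        fun a b h => Fin.val_injective (Nat.succ_injective h)
      calc ∑ i : Fin k, ((i : ℕ) + 1) * μ.count ((i : ℕ) + 1)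
          = ∑ j ∈ univ.image (fun i : Fin k => (i : ℕ) + 1), μ.count j * j := by
            rw [Finset.sum_image (fun a _ b _ h => hinj h)]
            exact Finset.sum_congr rfl fun i _ => mul_comm _ _
        _ = ∑ j ∈ μ.toFinset, μ.count j * j := by
            symm
            refine Finset.sum_subset hsub fun j _ hj => ?_
            rw [Multiset.count_eq_zero.mpr (fun hc => hj (Multiset.mem_toFinset.mpr hc)),
              zero_mul]
        _ = k := by rw [← sum_eq_toFinset_sum, hsum]
  · intro r hr
    funext i
    exact count_mur r i
  · intro μ hμ
    obtain ⟨hpos, hsum⟩ := mem_PS.mp hμ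
    refine Multiset.ext.mpr fun j => ?_
    by_cases hj : ∃ i : Fin k, (i : ℕ) + 1 = j
    · obtain ⟨i, rfl⟩ := hj
      exact count_mur _ i
    · push_neg at hj
      rw [count_mur0 _ _ hj, eq_comm, Multiset.count_eq_zero]
      intro hc
      have h1 := hpos j hc
      have h2 : j ≤ k := by
        rw [← hsum]; exact Multiset.single_le_sum (fun x _ => Nat.zero_le x) j hc
      exact hj ⟨j - 1, by omega⟩ (by simp; omega)
  · intro r hr
    rw [coeffW, card_mur, Rd_mur, prod_mur]

end WaringAux

open WaringAux in
/-- Waring's closed formula expressing the power sums in terms of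
the elementary symmetric sums of an absolutely summable complex sequence. -/
theorem waring_formula_infinite
    (lam : ℕ → ℂ) (hsum : Summable fun n => ‖lam n‖)
    (p : ℕ → ℂ) (hp : ∀ k, 1 ≤ k → p k = ∑' n, lam n ^ k)
    (e : ℕ → ℂ) (he : ∀ k, e k = ∑' S : {S : Finset ℕ // S.card = k}, ∏ i ∈ S.1, lam i) :
    ∀ k : ℕ, 1 ≤ k →
      p k = ∑ r ∈ (Fintype.piFinset fun _ : Fin k => Finset.range (k + 1)).filter
          (fun r => ∑ i : Fin k, ((i : ℕ) + 1) * r i = k),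
        (-1 : ℂ) ^ k * k * (((∑ i : Fin k, r i) - 1)! : ℕ) / ((∏ i : Fin k, (r i)! : ℕ) : ℂ) *
          ∏ i : Fin k, (-e ((i : ℕ) + 1)) ^ (r i) := by
  intro k hk
  set EN : ℕ → ℕ → ℂ := fun N j => ∑ t ∈ powersetCard j (Finset.range N), ∏ i ∈ t, lam i
    with hEN
  have hrange : ∀ N, Finset.range N = Finset.map Fin.valEmbedding (univ : Finset (Fin N)) := by
    intro N
    ext x
    simp only [Finset.mem_range, Finset.mem_map, Finset.mem_univ, true_and,
      Fin.valEmbedding_apply]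
    exact ⟨fun h => ⟨⟨x, h⟩, rfl⟩, fun ⟨a, ha⟩ => ha ▸ a.2⟩
  have h_esymm : ∀ (N j : ℕ), Esymm (fun i : Fin N => lam ↑i) j = EN N j := by
    intro N j
    rw [hEN, Esymm]
    simp only
    rw [hrange N, Finset.powersetCard_map, Finset.sum_map]
    refine Finset.sum_congr rfl fun t _ => ?_
    rw [show (Finset.mapEmbedding Fin.valEmbedding).toEmbedding t
        = Finset.map Fin.valEmbedding t from rfl, Finset.prod_map]
    rfl
  have h_fin : ∀ N : ℕ, ∑ n ∈ Finset.range N, lam n ^ k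
      = ∑ r ∈ (Fintype.piFinset fun _ : Fin k => Finset.range (k + 1)).filter
          (fun r => ∑ i : Fin k, ((i : ℕ) + 1) * r i = k),
        (-1 : ℂ) ^ k * k * (((∑ i : Fin k, r i) - 1)! : ℕ) / ((∏ i : Fin k, (r i)! : ℕ) : ℂ) *
          ∏ i : Fin k, (-(EN N ((i : ℕ) + 1))) ^ (r i) := by
    intro N
    rw [← Fin.sum_univ_eq_sum_range (fun n => lam n ^ k) N,
      finite_waring (fun i : Fin N => lam ↑i) k hk,
      tuple_form k hk (fun j => -Esymm (fun i : Fin N => lam ↑i) j)]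
    refine Finset.sum_congr rfl fun r _ => ?_
    congr 1
    exact Finset.prod_congr rfl fun i _ => by rw [h_esymm]
  -- summability of products over subsets
  have hgnorm : ∀ j : ℕ, Summable
      (fun S : {S : Finset ℕ // S.card = j} => ∏ i ∈ S.1, ‖lam i‖) := by
    intro j
    refine summable_of_sum_le (c := Real.exp (∑' n, ‖lam n‖))
      (fun S => Finset.prod_nonneg fun i _ => norm_nonneg _) fun v => ?_
    set B := v.sup (fun S => S.1) with hB
    have h1 : ∑ S ∈ v, ∏ i ∈ S.1, ‖lam i‖
        = ∑ t ∈ v.image (fun S => S.1), ∏ i ∈ t, ‖lam i‖ := by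
      rw [Finset.sum_image (fun a _ b _ h => Subtype.coe_injective h)]
    have h2 : v.image (fun S => S.1) ⊆ B.powerset := by
      intro t ht
      obtain ⟨S, hS, rfl⟩ := Finset.mem_image.mp ht
      exact Finset.mem_powerset.mpr (Finset.le_sup hS)
    calc ∑ S ∈ v, ∏ i ∈ S.1, ‖lam i‖
        = ∑ t ∈ v.image (fun S => S.1), ∏ i ∈ t, ‖lam i‖ := h1
      _ ≤ ∑ t ∈ B.powerset, ∏ i ∈ t, ‖lam i‖ :=
          Finset.sum_le_sum_of_subset_of_nonneg h2
            (fun t _ _ => Finset.prod_nonneg fun i _ => norm_nonneg _)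
      _ = ∏ i ∈ B, (‖lam i‖ + 1) := by rw [Finset.prod_add]; simp
      _ ≤ ∏ i ∈ B, Real.exp ‖lam i‖ :=
          Finset.prod_le_prod (fun i _ => by positivity)
            (fun i _ => Real.add_one_le_exp _)
      _ = Real.exp (∑ i ∈ B, ‖lam i‖) := (Real.exp_sum _ _).symm
      _ ≤ Real.exp (∑' n, ‖lam n‖) :=
          Real.exp_le_exp.mpr (Summable.sum_le_tsum B (fun i _ => norm_nonneg _) hsum)
  have hg : ∀ j : ℕ, Summable
      (fun S : {S : Finset ℕ // S.card = j} => ∏ i ∈ S.1, lam i) := by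
    intro j
    refine Summable.of_norm ?_
    have := hgnorm j
    simpa [norm_prod] using this
  have hE : ∀ j : ℕ, Filter.Tendsto (fun N => EN N j) Filter.atTop (𝓝 (e j)) := by
    intro j
    set t : ℕ → Finset {S : Finset ℕ // S.card = j} :=
      fun N => (powersetCard j (Finset.range N)).subtype (fun S => S.card = j) with ht
    have hmono : Monotone t := by
      intro a b hab S hS
      rw [ht, Finset.mem_subtype] at *
      exact Finset.powersetCard_mono (Finset.range_subset_range.mpr hab) hS
    have hexh : ∀ S : {S : Finset ℕ // S.card = j}, ∃ N, S ∈ t N := by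
      intro S
      obtain ⟨N, hN⟩ := Finset.exists_nat_subset_range S.1
      exact ⟨N, Finset.mem_subtype.mpr (Finset.mem_powersetCard.mpr ⟨hN, S.2⟩)⟩
    have h1 := (hg j).hasSum.comp
      (Filter.tendsto_atTop_finset_of_monotone hmono hexh)
    have h2 : ∀ N, EN N j = ∑ S ∈ t N, ∏ i ∈ S.1, lam i := by
      intro N
      rw [ht]
      simp only
      rw [Finset.sum_subtype_eq_sum_filter (fun t => ∏ i ∈ t, lam i)
          (p := fun S => S.card = j),
        Finset.filter_true_of_mem (fun S hS => (Finset.mem_powersetCard.mp hS).2)]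
    rw [he j]
    exact Filter.Tendsto.congr (fun N => (h2 N).symm) h1
  have hsk : Summable (fun n => lam n ^ k) := by
    refine Summable.of_norm_bounded_eventually hsum ?_
    have h0 : Filter.Tendsto (fun n => ‖lam n‖) Filter.cofinite (𝓝 0) :=
      hsum.tendsto_cofinite_zero
    filter_upwards [h0.eventually (eventually_le_nhds zero_lt_one)] with n hn
    rw [norm_pow]
    exact pow_le_of_le_one (norm_nonneg _) hn (by omega)
  have hP : Filter.Tendsto (fun N => ∑ n ∈ Finset.range N, lam n ^ k)
      Filter.atTop (𝓝 (p k)) := by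
    rw [hp k hk]
    exact hsk.hasSum.tendsto_sum_nat
  have hRHS : Filter.Tendsto (fun N =>
      ∑ r ∈ (Fintype.piFinset fun _ : Fin k => Finset.range (k + 1)).filter
          (fun r => ∑ i : Fin k, ((i : ℕ) + 1) * r i = k),
        (-1 : ℂ) ^ k * k * (((∑ i : Fin k, r i) - 1)! : ℕ) / ((∏ i : Fin k, (r i)! : ℕ) : ℂ) *
          ∏ i : Fin k, (-(EN N ((i : ℕ) + 1))) ^ (r i)) Filter.atTop
      (𝓝 (∑ r ∈ (Fintype.piFinset fun _ : Fin k => Finset.range (k + 1)).filter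
          (fun r => ∑ i : Fin k, ((i : ℕ) + 1) * r i = k),
        (-1 : ℂ) ^ k * k * (((∑ i : Fin k, r i) - 1)! : ℕ) / ((∏ i : Fin k, (r i)! : ℕ) : ℂ) *
          ∏ i : Fin k, (-e ((i : ℕ) + 1)) ^ (r i))) := by
    refine tendsto_finset_sum _ fun r _ => ?_
    refine Filter.Tendsto.const_mul _ ?_
    exact tendsto_finset_prod _ fun i _ => ((hE ((i : ℕ) + 1)).neg).pow (r i)
  exact tendsto_nhds_unique (Filter.Tendsto.congr h_fin hP) hRHS
end

section
/- Let λ : ℕ → ℂ with ∑_n ‖λ_n‖ < ∞ and let f : ℂ → ℂ be the entire function f(z) = ∏_n (1 − λ_n z) (the product converges absolutely for every z). Then for every integer k ≥ 0, the k-th derivative of f at 0 equals (−1)^k k! e_k; equivalently, e_k = (−1)^k/k! · f^{(k)}(0). -/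
open Complex Finset Nat

open scoped Topology

/-- Products over finsets of a nonnegative summable sequence are summable
(indexed by all finite subsets of ℕ). -/
lemma summable_prod_finset_of_nonneg {r : ℕ → ℝ} (hr : ∀ n, 0 ≤ r n) (hsum : Summable r) :
    Summable (fun t : Finset ℕ => ∏ i ∈ t, r i) := by
  apply summable_of_sum_le (c := Real.exp (∑' n, r n))
    (fun t => Finset.prod_nonneg fun i _ => hr i)
  intro T
  set s : Finset ℕ := T.sup id with hs
  have hT : T ⊆ s.powerset := fun t ht => Finset.mem_powerset.2 (Finset.le_sup (f := id) ht)
  calc ∑ t ∈ T, ∏ i ∈ t, r i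
      ≤ ∑ t ∈ s.powerset, ∏ i ∈ t, r i :=
        Finset.sum_le_sum_of_subset_of_nonneg hT
          (fun t _ _ => Finset.prod_nonneg fun i _ => hr i)
    _ = ∏ i ∈ s, (r i + 1) := by
        rw [Finset.prod_add]; simp
    _ ≤ ∏ i ∈ s, Real.exp (r i) := by
        apply Finset.prod_le_prod
        · intro i _; have := hr i; linarith
        · intro i _; exact Real.add_one_le_exp (r i)
    _ = Real.exp (∑ i ∈ s, r i) := (Real.exp_sum s r).symm
    _ ≤ Real.exp (∑' n, r n) :=
        Real.exp_le_exp.2 (Summable.sum_le_tsum s (fun i _ => hr i) hsum)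

lemma summable_prod_finset {a : ℕ → ℂ} (ha : Summable fun n => ‖a n‖) :
    Summable (fun t : Finset ℕ => ∏ i ∈ t, a i) := by
  apply Summable.of_norm_bounded
    (summable_prod_finset_of_nonneg (fun n => norm_nonneg _) ha)
  intro t
  rw [norm_prod]

/-- The infinite product `∏ (1 + aₙ)` for absolutely summable `a` has as value the
sum over all finite subsets of products. -/
lemma hasProd_one_add {a : ℕ → ℂ} (ha : Summable fun n => ‖a n‖) :
    HasProd (fun n => 1 + a n) (∑' t : Finset ℕ, ∏ i ∈ t, a i) := by
  have hg : Summable (fun t : Finset ℕ => ∏ i ∈ t, a i) := summable_prod_finset ha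
  have hS := hg.hasSum
  have hpow : Filter.Tendsto (fun s : Finset ℕ => s.powerset) Filter.atTop Filter.atTop :=
    Filter.tendsto_atTop_finset_of_monotone
      (fun s s' h => Finset.powerset_mono.2 h)
      (fun t => ⟨t, Finset.mem_powerset_self t⟩)
  have hcomp := hS.comp hpow
  have heq : ∀ s : Finset ℕ, ∏ i ∈ s, (1 + a i) = ∑ t ∈ s.powerset, ∏ i ∈ t, a i := by
    intro s
    simp_rw [add_comm (1 : ℂ)]
    rw [Finset.prod_add]
    simp
  unfold HasProd
  convert hcomp using 1
  funext s
  exact heq s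
  rfl

/-- the Taylor coefficients at 0 of the genus-0 product
`f(z) = ∏ (1 - λₙ z)` are the signed elementary symmetric sums:
`f⁽ᵏ⁾(0) = (-1)^k k! e_k`. -/
theorem iteratedDeriv_product_eq_elementary
    (lam : ℕ → ℂ) (hsum : Summable fun n => ‖lam n‖)
    (f : ℂ → ℂ) (hf : ∀ z, f z = ∏' n, (1 - lam n * z))
    (e : ℕ → ℂ) (he : ∀ k, e k = ∑' S : {S : Finset ℕ // S.card = k}, ∏ i ∈ S.1, lam i) :
    ∀ k : ℕ, iteratedDeriv k f 0 = (-1 : ℂ) ^ k * (k ! : ℕ) * e k := by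
  classical
  set c : ℕ → ℂ := fun k => (-1 : ℂ) ^ k * e k with hc
  have hglam : Summable (fun t : Finset ℕ => ∏ i ∈ t, lam i) := summable_prod_finset hsum
  -- key: power series expansion at every point
  have key : ∀ z : ℂ, HasSum (fun k : ℕ => c k * z ^ k) (f z) := by
    intro z
    have ha : Summable fun n => ‖-(lam n * z)‖ := by
      simpa [norm_mul] using hsum.mul_right ‖z‖
    have hp := hasProd_one_add ha
    have hfz : f z = ∑' t : Finset ℕ, ∏ i ∈ t, -(lam i * z) := by
      have hfun : (fun n => 1 - lam n * z) = fun n => 1 + -(lam n * z) := by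
        funext n; ring
      rw [hf z, hfun, hp.tprod_eq]
    have hg : Summable (fun t : Finset ℕ => ∏ i ∈ t, -(lam i * z)) :=
      summable_prod_finset ha
    have hS : HasSum (fun t : Finset ℕ => ∏ i ∈ t, -(lam i * z)) (f z) :=
      hfz ▸ hg.hasSum
    -- regroup by cardinality
    set ε := Equiv.sigmaFiberEquiv (fun S : Finset ℕ => S.card) with hε
    have hcomp : HasSum (fun x : Σ k : ℕ, {S : Finset ℕ // S.card = k} =>
        ∏ i ∈ (x.2 : Finset ℕ), -(lam i * z)) (f z) := by
      exact (ε.hasSum_iff).2 hS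
    apply hcomp.sigma
    intro k
    -- the fiber sum
    have hfib : Summable (fun S : {S : Finset ℕ // S.card = k} => ∏ i ∈ S.1, lam i) :=
      hglam.subtype _
    have h1 : HasSum (fun S : {S : Finset ℕ // S.card = k} => ∏ i ∈ S.1, lam i) (e k) := by
      rw [he k]
      exact hfib.hasSum
    have h2 := h1.mul_left ((-z) ^ k)
    have hfun2 : (fun S : {S : Finset ℕ // S.card = k} => ∏ i ∈ S.1, -(lam i * z))
        = fun S => (-z) ^ k * ∏ i ∈ S.1, lam i := by
      funext S
      rw [Finset.prod_congr rfl
        (fun i _ => by ring : ∀ i ∈ S.1, -(lam i * z) = lam i * -z),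
        Finset.prod_mul_distrib, Finset.prod_const, S.2]
      ring
    have hval : (-z) ^ k * e k = c k * z ^ k := by
      rw [hc, neg_pow]; ring
    rw [← hval]
    exact hfun2 ▸ h2
  -- package as a formal power series
  set p := FormalMultilinearSeries.ofScalars ℂ c with hp
  have hcoeff : ∀ n, p.coeff n = c n := by
    intro n
    have h := FormalMultilinearSeries.ofScalars_apply_eq (c := c) (E := ℂ) (1 : ℂ) n
    simp only [one_pow, smul_eq_mul, mul_one] at h
    exact h
  have hP : HasFPowerSeriesAt f p 0 := by
    rw [hasFPowerSeriesAt_iff]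
    filter_upwards with z
    have := key z
    simp only [hcoeff, smul_eq_mul, zero_add]
    simpa [mul_comm] using this
  obtain ⟨r, hball⟩ := hP
  intro k
  have hfac := hball.factorial_smul (y := (1 : ℂ)) k
  have hap : p k (fun _ => (1 : ℂ)) = c k := by
    have h := FormalMultilinearSeries.ofScalars_apply_eq (c := c) (E := ℂ) (1 : ℂ) k
    simp only [one_pow, smul_eq_mul, mul_one] at h
    exact h
  rw [hap] at hfac
  rw [iteratedDeriv_eq_iteratedFDeriv, ← hfac]
  simp only [nsmul_eq_mul, hc]
  ring
end

section
/- Let λ : ℕ → ℂ with ∑_n ‖λ_n‖ < ∞ and let f : ℂ → ℂ be the entire function f(z) = ∏_n (1 − λ_n z) (the product converges absolutely for every z; f(0) = 1 and f is nonvanishing in a neighborhood of 0). Then for every integer k ≥ 1, the k-th derivative at 0 of the function z ↦ log f(z) (principal branch of the complex logarithm) equals −(k−1)! · p_k; equivalently, p_k = −1/(k−1)! · (d^k/dz^k) log f(z) |_{z=0}. -/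
open Complex Finset Nat

set_option maxHeartbeats 1000000 in
/-- the Taylor coefficients at 0 of `log f(z)`, where
`f(z) = ∏ (1 - λₙ z)`, are the (negated, scaled) power sums:
`(d^k/dz^k) log f(z) |_{z=0} = -(k-1)! p_k` for `k ≥ 1`. -/
theorem iteratedDeriv_log_product_eq_power_sum
    (lam : ℕ → ℂ) (hsum : Summable fun n => ‖lam n‖)
    (f : ℂ → ℂ) (hf : ∀ z, f z = ∏' n, (1 - lam n * z))
    (p : ℕ → ℂ) (hp : ∀ k, 1 ≤ k → p k = ∑' n, lam n ^ k) :
    ∀ k : ℕ, 1 ≤ k →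
      iteratedDeriv k (fun z => Complex.log (f z)) 0 = -(((k - 1)! : ℕ) : ℂ) * p k := by
  classical
  set T : ℝ := ∑' n, ‖lam n‖ with hTdef
  have hT0 : 0 ≤ T := tsum_nonneg fun n => norm_nonneg _
  set M : ℝ := T + 1 with hMdef
  have hM0 : 0 < M := by positivity
  have hM1 : 1 ≤ M := by rw [hMdef]; linarith
  have hTM : T ≤ M := by rw [hMdef]; linarith
  have hlamT : ∀ n, ‖lam n‖ ≤ T := fun n => Summable.le_tsum hsum n fun _ _ => norm_nonneg _
  set r : ℝ := (2 * M)⁻¹ with hrdef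
  have hr0 : 0 < r := by positivity
  have hMr : M * r = 1 / 2 := by
    rw [hrdef, mul_inv, ← mul_assoc, mul_comm M, mul_assoc,
      mul_inv_cancel₀ hM0.ne', mul_one, one_div]
  -- coefficients
  set c : ℕ → ℂ := fun k => -(∑' n, lam n ^ k) / k with hcdef
  have hc0 : c 0 = 0 := by simp [hcdef]
  -- bound on lam n ^ k sums
  have hlamk : ∀ k : ℕ, 1 ≤ k → (Summable fun n => ‖lam n‖ ^ k) ∧
      (∑' n, ‖lam n‖ ^ k) ≤ T * M ^ (k - 1) := by
    intro k hk
    have hble : ∀ n, ‖lam n‖ ^ k ≤ ‖lam n‖ * M ^ (k - 1) := by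
      intro n
      calc ‖lam n‖ ^ k = ‖lam n‖ * ‖lam n‖ ^ (k - 1) := by
            rw [← _root_.pow_succ']; congr 1; omega
        _ ≤ ‖lam n‖ * M ^ (k - 1) := by
            gcongr; exact (hlamT n).trans hTM
    have hs : Summable fun n => ‖lam n‖ * M ^ (k - 1) := hsum.mul_right _
    have h1 : Summable fun n => ‖lam n‖ ^ k :=
      hs.of_nonneg_of_le (fun n => by positivity) hble
    refine ⟨h1, ?_⟩
    calc (∑' n, ‖lam n‖ ^ k) ≤ ∑' n, ‖lam n‖ * M ^ (k - 1) := Summable.tsum_le_tsum hble h1 hs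
      _ = T * M ^ (k - 1) := by rw [tsum_mul_right]
  have hck : ∀ k : ℕ, ‖c k‖ ≤ T * M ^ k := by
    intro k
    rcases Nat.eq_zero_or_pos k with rfl | hk
    · simp [hc0]; positivity
    obtain ⟨h1, h2⟩ := hlamk k hk
    have h1k : (1:ℝ) ≤ ‖(k : ℂ)‖ := by
      rw [Complex.norm_natCast]; exact_mod_cast hk
    have : ‖c k‖ ≤ ‖∑' n, lam n ^ k‖ := by
      rw [hcdef]
      simp only [norm_div, norm_neg]
      exact div_le_self (norm_nonneg _) h1k
    refine this.trans ?_
    calc ‖∑' n, lam n ^ k‖ ≤ ∑' n, ‖lam n ^ k‖ := by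
          refine norm_tsum_le_tsum_norm ?_
          simpa [norm_pow] using h1
      _ = ∑' n, ‖lam n‖ ^ k := by simp [norm_pow]
      _ ≤ T * M ^ (k - 1) := h2
      _ ≤ T * M ^ k := mul_le_mul_of_nonneg_left (pow_le_pow_right₀ hM1 (by omega)) hT0
  -- the power series
  set q : FormalMultilinearSeries ℂ ℂ ℂ := FormalMultilinearSeries.ofScalars ℂ c with hqdef
  set g : ℂ → ℂ := fun z => ∑' k, c k * z ^ k with hgdef
  have hsummg : ∀ y : ℂ, ‖y‖ < r → Summable fun k => c k * y ^ k := by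
    intro y hy
    refine Summable.of_norm_bounded (g := fun k => T * (1/2 : ℝ) ^ k) ?_ ?_
    · exact (summable_geometric_of_lt_one (by norm_num) (by norm_num)).mul_left T
    · intro k
      calc ‖c k * y ^ k‖ = ‖c k‖ * ‖y‖ ^ k := by simp [norm_pow]
        _ ≤ (T * M ^ k) * r ^ k :=
            mul_le_mul (hck k) (pow_le_pow_left₀ (norm_nonneg y) hy.le k)
              (by positivity) (by positivity)
        _ = T * (M * r) ^ k := by rw [mul_pow]; ring
        _ = T * (1/2 : ℝ) ^ k := by rw [hMr]
  have hps : HasFPowerSeriesOnBall g q 0 (ENNReal.ofReal r) := by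
    refine ⟨?_, ENNReal.ofReal_pos.mpr hr0, ?_⟩
    · refine le_trans ?_ (q.le_radius_of_bound T (r := r.toNNReal) ?_)
      · simp [ENNReal.ofReal]
      · intro k
        have hnorm : ‖q k‖ = ‖c k‖ := by
          rw [hqdef]; exact FormalMultilinearSeries.ofScalars_norm ℂ c k
        rw [hnorm]
        have : (r.toNNReal : ℝ) = r := Real.coe_toNNReal r hr0.le
        rw [this]
        calc ‖c k‖ * r ^ k ≤ (T * M ^ k) * r ^ k :=
            mul_le_mul_of_nonneg_right (hck k) (by positivity)
          _ = T * (M * r) ^ k := by rw [mul_pow]; ring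
          _ = T * (1/2 : ℝ) ^ k := by rw [hMr]
          _ ≤ T * 1 :=
            mul_le_mul_of_nonneg_left (pow_le_one₀ (by norm_num) (by norm_num)) hT0
          _ = T := by ring
    · intro y hy
      rw [Metric.emetric_ball, Metric.mem_ball, _root_.dist_zero_right] at hy
      have hy' : ‖y‖ < r := hy
      have : (fun n => q n fun _ => y) = fun n => c n * y ^ n := by
        funext n
        rw [hqdef, FormalMultilinearSeries.ofScalars_apply_eq, smul_eq_mul]
      rw [this, zero_add]
      exact (hsummg y hy').hasSum
  -- local equality of log ∘ f with g
  have heq : (fun z => Complex.log (f z)) =ᶠ[nhds (0 : ℂ)] g := by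
    filter_upwards [Metric.ball_mem_nhds (0 : ℂ) hr0] with z hz
    rw [Metric.mem_ball, _root_.dist_zero_right] at hz
    have hb : ∀ n, ‖lam n * z‖ ≤ 1 / 2 := by
      intro n
      calc ‖lam n * z‖ = ‖lam n‖ * ‖z‖ := norm_mul _ _
        _ ≤ M * r := mul_le_mul ((hlamT n).trans hTM) hz.le (norm_nonneg z) hM0.le
        _ = 1 / 2 := hMr
    have hb1 : ∀ n, ‖lam n * z‖ < 1 := fun n => lt_of_le_of_lt (hb n) (by norm_num)
    have hne : ∀ n, (1 : ℂ) - lam n * z ≠ 0 := by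
      intro n h
      have hw : lam n * z = 1 := by linear_combination -h
      have h2 := hb n
      rw [hw] at h2
      norm_num at h2
    have hlogb : ∀ n, ‖Complex.log (1 - lam n * z)‖ ≤ 3/2 * ‖lam n * z‖ := by
      intro n
      have := Complex.norm_log_one_add_half_le_self (z := -(lam n * z)) (by
        rw [norm_neg]; exact hb n)
      rw [norm_neg] at this
      have h1 : (1 : ℂ) + -(lam n * z) = 1 - lam n * z := by ring
      rwa [h1] at this
    have hsl : Summable fun n => Complex.log (1 - lam n * z) := by
      refine Summable.of_norm_bounded (g := fun n => 3/2 * (‖lam n‖ * ‖z‖)) ?_ ?_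
      · exact ((hsum.mul_right ‖z‖).mul_left _)
      · intro n; simpa [norm_mul] using hlogb n
    set S : ℂ := ∑' n, Complex.log (1 - lam n * z) with hSdef
    have hfz : f z = Complex.exp S := by
      have hprod : HasProd (fun n => 1 - lam n * z) (Complex.exp S) := by
        refine (hsl.hasSum.cexp).congr_fun ?_
        intro n
        simp only [Function.comp_apply]
        rw [Complex.exp_log (hne n)]
      rw [hf z, hprod.tprod_eq]
    have hSnorm : ‖S‖ ≤ 3/4 := by
      calc ‖S‖ ≤ ∑' n, ‖Complex.log (1 - lam n * z)‖ := norm_tsum_le_tsum_norm hsl.norm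
        _ ≤ ∑' n, 3/2 * (‖lam n‖ * ‖z‖) := by
            refine Summable.tsum_le_tsum ?_ hsl.norm ?_
            · intro n; simpa [norm_mul] using hlogb n
            · exact (hsum.mul_right ‖z‖).mul_left _
        _ = 3/2 * (T * ‖z‖) := by
            rw [tsum_mul_left, tsum_mul_right]
        _ ≤ 3/2 * (M * r) := by
            nlinarith [hz.le, hTM, hT0, norm_nonneg z, hr0.le]
        _ = 3/4 := by rw [hMr]; norm_num
    have hlog_exp : Complex.log (Complex.exp S) = S := by
      refine Complex.log_exp ?_ ?_
      · have := (Complex.abs_im_le_norm S)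
        nlinarith [Real.pi_gt_three, abs_le.mp (le_trans this hSnorm)]
      · have := (Complex.abs_im_le_norm S)
        nlinarith [Real.pi_gt_three, abs_le.mp (le_trans this hSnorm)]
    -- now the double sum
    set F : ℕ → ℕ → ℂ := fun n k => -((lam n * z) ^ k / k) with hFdef
    have hFsummable : Summable (Function.uncurry F) := by
      refine Summable.of_norm_bounded (g := fun nk : ℕ × ℕ => (2 * r * ‖lam nk.1‖) * (1/2 : ℝ) ^ nk.2) ?_ ?_
      · exact Summable.mul_of_nonneg ((hsum.mul_left (2 * r)))
          (summable_geometric_of_lt_one (by norm_num) (by norm_num))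
          (fun n => by positivity) (fun k => by positivity)
      · rintro ⟨n, k⟩
        simp only [Function.uncurry, hFdef, norm_neg, norm_div]
        rcases Nat.eq_zero_or_pos k with rfl | hk
        · simp only [pow_zero, Nat.cast_zero, norm_zero, div_zero]
          positivity
        · obtain ⟨j, rfl⟩ : ∃ j, k = j + 1 := ⟨k - 1, by omega⟩
          have hk1 : (1:ℝ) ≤ ‖((j+1 : ℕ) : ℂ)‖ := by
            rw [Complex.norm_natCast]; exact_mod_cast hk
          have e1 : ‖(lam n * z) ^ (j+1)‖ / ‖((j+1 : ℕ) : ℂ)‖ ≤ ‖lam n * z‖ ^ (j+1) := by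
            rw [norm_pow]; exact div_le_self (by positivity) hk1
          have e2 : ‖lam n * z‖ ^ (j+1) ≤ (‖lam n‖ * r) * (1/2:ℝ) ^ j := by
            rw [_root_.pow_succ']
            have h1 : ‖lam n * z‖ ≤ ‖lam n‖ * r := by
              rw [norm_mul]
              exact mul_le_mul_of_nonneg_left hz.le (norm_nonneg _)
            exact mul_le_mul h1 (pow_le_pow_left₀ (norm_nonneg _) (hb n) _)
              (by positivity) (by positivity)
          have e3 : (‖lam n‖ * r) * (1/2:ℝ) ^ j = (2 * r * ‖lam n‖) * (1/2:ℝ) ^ (j+1) := by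
            ring
          calc ‖(lam n * z) ^ (j+1)‖ / ‖((j+1 : ℕ) : ℂ)‖ ≤ ‖lam n * z‖ ^ (j+1) := e1
            _ ≤ (‖lam n‖ * r) * (1/2:ℝ) ^ j := e2
            _ = (2 * r * ‖lam n‖) * (1/2:ℝ) ^ (j+1) := e3
    have hrow : ∀ n, ∑' k, F n k = Complex.log (1 - lam n * z) := by
      intro n
      have h := Complex.hasSum_taylorSeries_neg_log (z := lam n * z) (hb1 n)
      have h2 : HasSum (fun k : ℕ => F n k) (Complex.log (1 - lam n * z)) := by
        have := h.neg
        simpa [hFdef] using this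
      exact h2.tsum_eq
    have hcol : ∀ k, ∑' n, F n k = c k * z ^ k := by
      intro k
      have : ∀ n, F n k = lam n ^ k * -(z ^ k / k) := by
        intro n; simp [hFdef, mul_pow]; ring
      rw [tsum_congr this, tsum_mul_right, hcdef]
      ring
    have hSg : S = g z := by
      calc S = ∑' n, ∑' k, F n k := by rw [hSdef]; exact (tsum_congr hrow).symm
        _ = ∑' k, ∑' n, F n k := (Summable.tsum_comm hFsummable).symm
        _ = ∑' k, c k * z ^ k := tsum_congr hcol
        _ = g z := rfl
    rw [hfz, hlog_exp, hSg]
  -- conclude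
  intro k hk
  rw [Filter.EventuallyEq.iteratedDeriv_eq k heq]
  have hfd := hps.factorial_smul (y := (1 : ℂ)) k
  have hqk : q k (fun _ => (1 : ℂ)) = c k := by
    rw [hqdef, FormalMultilinearSeries.ofScalars_apply_eq, one_pow, smul_eq_mul, mul_one]
  rw [iteratedDeriv_eq_iteratedFDeriv, ← hfd, hqk, nsmul_eq_mul]
  have hck' : c k = -(∑' n, lam n ^ k) / k := rfl
  rw [hck', hp k hk]
  have hk0 : (k : ℂ) ≠ 0 := by
    have : k ≠ 0 := by omega
    exact_mod_cast this
  have hfac : (k ! : ℂ) = (k : ℂ) * ((k-1)! : ℕ) := by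
    have h := Nat.mul_factorial_pred (show k ≠ 0 by omega)
    exact_mod_cast h.symm
  rw [hfac]
  field_simp
end
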